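/- arXiv:1305.1681 — 6 statements merged into one kernel-verified Lean document; each statement's English description precedes it below -/
import Mathlib

section
/- Let G=(V,w) be a weighted graph on n vertices that is a γ-stable instance of Max Cut (γ ≥ 1) with maximum cut (S,S̄). Let {ū_u : u ∈ V} be a feasible solution of the Goemans–Williamson SDP relaxation with triangle inequalities whose objective value is at least w(E(S,S̄)), and define û_u = ū_u for u ∈ S and û_u = −ū_u for u ∉ S. Assume that whenever the vectors {û_u : u ∈ V} are not all equal, there exist a real σ > 0 and a finitely supported probability distribution over subsets A of V with ∅ ≠ A ≠ V such that for every pair of vertices u,v: σ·Pr[exactly one of u,v lies in A] ≤ ‖û_u − û_v‖² ≤ σ·γ·Pr[exactly one of u,v lies in A] (such a distribution exists whenever γ is at least the least distortion D_{ℓ2²→ℓ1}(n) with which every n-point metric space of negative type embeds into ℓ1). Then the SDP solution is integral: all the vectors û_u are equal, i.e., there is a unit vector ē with ū_u = ē for all u ∈ S and ū_u = −ē for all u ∉ S. -/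
set_option maxHeartbeats 2000000


open Finset

/-- The pair `{u, v}` is separated by the cut `(S, V∖S)`. -/
abbrev cutSep {V : Type*} (S : Finset V) (u v : V) : Prop :=
  (u ∈ S ∧ v ∉ S) ∨ (v ∈ S ∧ u ∉ S)

/-- Total weight of the set of unordered pairs `{u,v}` satisfying the symmetric
predicate `P`; the sum over ordered pairs counts each unordered pair twice, whence
the division by `2`. -/
noncomputable def cutWeight {V : Type*} [Fintype V] (w : V → V → ℝ)
    (P : V → V → Prop) : ℝ :=
  have := Classical.propDecidable
  (∑ u, ∑ v, if P u v then w u v else 0) / 2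

/-- `G = (V, w)` is a `γ`-stable instance of Max Cut with maximum cut `(S, V∖S)`:
for every cut `(T, V∖T)` different from `(S, V∖S)`,
`w(E(S,S̄)∖E(T,T̄)) > γ·w(E(T,T̄)∖E(S,S̄))`. -/
def IsMaxCutStable {V : Type*} [Fintype V] [DecidableEq V]
    (w : V → V → ℝ) (γ : ℝ) (S : Finset V) : Prop :=
  ∀ T : Finset V, T ≠ S → T ≠ Sᶜ →
    γ * cutWeight w (fun u v => cutSep T u v ∧ ¬ cutSep S u v) <
      cutWeight w (fun u v => cutSep S u v ∧ ¬ cutSep T u v)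


lemma cutWeight_eq' {V : Type*} [Fintype V] (w : V → V → ℝ)
    (P : V → V → Prop) [∀ u v, Decidable (P u v)] :
    cutWeight w P = (∑ u, ∑ v, if P u v then w u v else 0) / 2 := by
  simp only [cutWeight]
  congr!

lemma cutWeight_congr' {V : Type*} [Fintype V] (w : V → V → ℝ)
    {P Q : V → V → Prop} (h : ∀ u v, P u v ↔ Q u v) :
    cutWeight w P = cutWeight w Q := by
  simp only [cutWeight]
  refine congrArg (· / 2) ?_
  refine Finset.sum_congr rfl fun u _ => Finset.sum_congr rfl fun v _ => ?_
  classical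
  exact if_congr (h u v) rfl rfl

/-- Let `G = (V, w)` be a `γ`-stable instance of Max Cut (`γ ≥ 1`) with
maximum cut `(S, S̄)`, and let `{ū_u}` be a feasible solution of the Goemans–Williamson SDP
relaxation with `ℓ2²`-triangle inequalities whose objective value is at least `w(E(S,S̄))`.
Set `û_u = ū_u` for `u ∈ S` and `û_u = −ū_u` for `u ∉ S`.  Assume that whenever the vectors
`û_u` are not all equal there are `σ > 0` and a finitely supported probability distribution
over subsets `∅ ≠ A ≠ V` with
`σ·Pr[A separates u,v] ≤ ‖û_u − û_v‖² ≤ σ·γ·Pr[A separates u,v]` for all `u, v`.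
Then the SDP solution is integral: there is a unit vector `ē` with `ū_u = ē` on `S` and
`ū_u = −ē` off `S`. -/
theorem stmt0 {V : Type*} [Fintype V] [DecidableEq V] [Nonempty V]
    {H : Type*} [NormedAddCommGroup H] [InnerProductSpace ℝ H]
    (w : V → V → ℝ) (hsymm : ∀ u v, w u v = w v u) (hnonneg : ∀ u v, 0 ≤ w u v)
    (γ : ℝ) (hγ : 1 ≤ γ) (S : Finset V)
    (hstable : IsMaxCutStable w γ S)
    (ubar : V → H) (hunit : ∀ u, ‖ubar u‖ = 1)
    (htri : ∀ x ∈ {y : H | ∃ u, y = ubar u ∨ y = -ubar u},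
            ∀ y ∈ {y : H | ∃ u, y = ubar u ∨ y = -ubar u},
            ∀ z ∈ {y : H | ∃ u, y = ubar u ∨ y = -ubar u},
              ‖x - y‖ ^ 2 + ‖y - z‖ ^ 2 ≥ ‖x - z‖ ^ 2)
    (hobj : cutWeight w (cutSep S) ≤ ((∑ u, ∑ v, w u v * ‖ubar u - ubar v‖ ^ 2) / 2) / 4)
    (hat : V → H) (hhat : ∀ u, hat u = if u ∈ S then ubar u else -ubar u)
    (hembed : (¬ ∀ u v : V, hat u = hat v) →
      ∃ σ : ℝ, 0 < σ ∧ ∃ p : Finset V → ℝ,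
        (∀ A, 0 ≤ p A) ∧ (∑ A : Finset V, p A = 1) ∧
        (∀ A, p A ≠ 0 → A ≠ ∅ ∧ A ≠ Finset.univ) ∧
        (∀ u v : V,
          σ * (∑ A : Finset V, p A * (if cutSep A u v then 1 else 0)) ≤
              ‖hat u - hat v‖ ^ 2 ∧
          ‖hat u - hat v‖ ^ 2 ≤
              σ * γ * (∑ A : Finset V, p A * (if cutSep A u v then 1 else 0)))) :
    ∃ e : H, ‖e‖ = 1 ∧ ∀ u, ubar u = if u ∈ S then e else -e := by
  classical
  suffices hall : ∀ u v : V, hat u = hat v by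
    obtain ⟨u0⟩ := (inferInstance : Nonempty V)
    refine ⟨hat u0, ?_, fun u => ?_⟩
    · rw [hhat u0]; split <;> simp [hunit]
    · have h1 := hhat u
      have h2 := hall u u0
      by_cases hu : u ∈ S
      · rw [if_pos hu] at h1 ⊢; rw [← h2, h1]
      · rw [if_neg hu] at h1 ⊢; rw [← h2, h1, neg_neg]
  by_contra hall
  obtain ⟨σ, hσ, p, hp0, hp1, hpA, hpq⟩ := hembed hall
  -- abbreviations
  set q : V → V → ℝ :=
    fun u v => ∑ A : Finset V, p A * (if cutSep A u v then 1 else 0) with hqdef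
  set Ws : ℝ := ∑ u, ∑ v, if cutSep S u v then w u v else 0 with hWs
  set Xs : ℝ := ∑ u, ∑ v, if cutSep S u v then w u v * ‖hat u - hat v‖ ^ 2 else 0 with hXs
  set Xn : ℝ := ∑ u, ∑ v, if cutSep S u v then 0 else w u v * ‖hat u - hat v‖ ^ 2 with hXn
  set Y : Finset V → ℝ :=
    fun A => ∑ u, ∑ v, if cutSep S u v ∧ cutSep A u v then w u v else 0 with hY
  set Z : Finset V → ℝ :=
    fun A => ∑ u, ∑ v, if cutSep A u v ∧ ¬ cutSep S u v then w u v else 0 with hZ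
  -- geometric identity pointwise
  have key : ∀ u v, w u v * ‖ubar u - ubar v‖ ^ 2
      = 4 * (if cutSep S u v then w u v else 0)
        - (if cutSep S u v then w u v * ‖hat u - hat v‖ ^ 2 else 0)
        + (if cutSep S u v then 0 else w u v * ‖hat u - hat v‖ ^ 2) := by
    intro u v
    have hsum : ∀ a b : H, ‖a‖ = 1 → ‖b‖ = 1 → ‖a - b‖ ^ 2 + ‖a + b‖ ^ 2 = 4 := by
      intro a b ha hb
      have h1 := norm_add_sq_real a b
      have h2 := norm_sub_sq_real a b
      rw [ha, hb] at h1 h2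
      linarith
    by_cases h : cutSep S u v
    · simp only [if_pos h]
      have h4 : ‖ubar u - ubar v‖ ^ 2 + ‖hat u - hat v‖ ^ 2 = 4 := by
        rcases h with ⟨hu, hv⟩ | ⟨hv, hu⟩
        · have he : hat u - hat v = ubar u + ubar v := by
            rw [hhat u, hhat v, if_pos hu, if_neg hv, sub_neg_eq_add]
          rw [he]
          exact hsum _ _ (hunit u) (hunit v)
        · have he : hat u - hat v = -(ubar u + ubar v) := by
            rw [hhat u, hhat v, if_neg hu, if_pos hv]; abel
          rw [he, norm_neg]
          exact hsum _ _ (hunit u) (hunit v)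
      linear_combination (w u v) * h4
    · simp only [if_neg h]
      have he : ‖ubar u - ubar v‖ = ‖hat u - hat v‖ := by
        rw [hhat u, hhat v]
        by_cases hu : u ∈ S <;> by_cases hv : v ∈ S
        · rw [if_pos hu, if_pos hv]
        · exact absurd (Or.inl ⟨hu, hv⟩) h
        · exact absurd (Or.inr ⟨hv, hu⟩) h
        · rw [if_neg hu, if_neg hv, ← norm_neg]
          congr 1; abel
      rw [he]; ring
  -- Step A : Xs ≤ Xn
  have hXsXn : Xs ≤ Xn := by
    have hsum_eq : (∑ u, ∑ v, w u v * ‖ubar u - ubar v‖ ^ 2) = 4 * Ws - Xs + Xn := by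
      rw [hWs, hXs, hXn]
      rw [show (∑ u, ∑ v, w u v * ‖ubar u - ubar v‖ ^ 2)
          = ∑ u, ∑ v, (4 * (if cutSep S u v then w u v else 0)
            - (if cutSep S u v then w u v * ‖hat u - hat v‖ ^ 2 else 0)
            + (if cutSep S u v then 0 else w u v * ‖hat u - hat v‖ ^ 2)) from
        Finset.sum_congr rfl fun u _ => Finset.sum_congr rfl fun v _ => key u v]
      simp only [Finset.sum_add_distrib, Finset.sum_sub_distrib, ← Finset.mul_sum]
    have hobj' : Ws / 2 ≤ ((4 * Ws - Xs + Xn) / 2) / 4 := by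
      rw [← hsum_eq]
      rw [cutWeight_eq' w (cutSep S)] at hobj
      rw [hWs]
      exact hobj
    linarith
  -- Step B1 : swapping sums for the separated part
  have hQs : (∑ u, ∑ v, if cutSep S u v then w u v * q u v else 0)
      = ∑ A : Finset V, p A * Y A := by
    have hpt : ∀ u v, (if cutSep S u v then w u v * q u v else 0)
        = ∑ A : Finset V, p A * (if cutSep S u v ∧ cutSep A u v then w u v else 0) := by
      intro u v
      by_cases hS : cutSep S u v
      · simp only [if_pos hS, hqdef, true_and, hS]
        rw [Finset.mul_sum]
        refine Finset.sum_congr rfl fun A _ => ?_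
        by_cases hA : cutSep A u v
        · simp only [if_pos hA, if_pos (And.intro hS hA)]; ring
        · simp only [if_neg hA, if_neg (fun hc : cutSep S u v ∧ cutSep A u v => hA hc.2)]
          ring
      · simp [hS]
    calc (∑ u, ∑ v, if cutSep S u v then w u v * q u v else 0)
        = ∑ u, ∑ v, ∑ A : Finset V,
            p A * (if cutSep S u v ∧ cutSep A u v then w u v else 0) :=
          Finset.sum_congr rfl fun u _ => Finset.sum_congr rfl fun v _ => hpt u v
      _ = ∑ A : Finset V, ∑ u, ∑ v,
            p A * (if cutSep S u v ∧ cutSep A u v then w u v else 0) := by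
          rw [show (∑ u, ∑ v, ∑ A : Finset V,
              p A * (if cutSep S u v ∧ cutSep A u v then w u v else 0))
              = ∑ u, ∑ A : Finset V, ∑ v,
              p A * (if cutSep S u v ∧ cutSep A u v then w u v else 0) from
            Finset.sum_congr rfl fun u _ => Finset.sum_comm]
          exact Finset.sum_comm
      _ = ∑ A : Finset V, p A * Y A := by
          refine Finset.sum_congr rfl fun A _ => ?_
          rw [hY]
          simp only [Finset.mul_sum]
  -- Step B2 : swapping sums for the non-separated part
  have hQn : (∑ u, ∑ v, if cutSep S u v then 0 else w u v * q u v)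
      = ∑ A : Finset V, p A * Z A := by
    have hpt : ∀ u v, (if cutSep S u v then 0 else w u v * q u v)
        = ∑ A : Finset V, p A * (if cutSep A u v ∧ ¬ cutSep S u v then w u v else 0) := by
      intro u v
      by_cases hS : cutSep S u v
      · simp [hS]
      · simp only [if_neg hS, hqdef]
        rw [Finset.mul_sum]
        refine Finset.sum_congr rfl fun A _ => ?_
        by_cases hA : cutSep A u v
        · simp only [if_pos hA, if_pos (And.intro hA hS)]; ring
        · simp only [if_neg hA, if_neg (fun hc : cutSep A u v ∧ ¬ cutSep S u v => hA hc.1)]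
          ring
    calc (∑ u, ∑ v, if cutSep S u v then 0 else w u v * q u v)
        = ∑ u, ∑ v, ∑ A : Finset V,
            p A * (if cutSep A u v ∧ ¬ cutSep S u v then w u v else 0) :=
          Finset.sum_congr rfl fun u _ => Finset.sum_congr rfl fun v _ => hpt u v
      _ = ∑ A : Finset V, ∑ u, ∑ v,
            p A * (if cutSep A u v ∧ ¬ cutSep S u v then w u v else 0) := by
          rw [show (∑ u, ∑ v, ∑ A : Finset V,
              p A * (if cutSep A u v ∧ ¬ cutSep S u v then w u v else 0))
              = ∑ u, ∑ A : Finset V, ∑ v,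
              p A * (if cutSep A u v ∧ ¬ cutSep S u v then w u v else 0) from
            Finset.sum_congr rfl fun u _ => Finset.sum_comm]
          exact Finset.sum_comm
      _ = ∑ A : Finset V, p A * Z A := by
          refine Finset.sum_congr rfl fun A _ => ?_
          rw [hZ]
          simp only [Finset.mul_sum]
  -- Step B3 : lower bound on Xs
  have hXsY : σ * ∑ A : Finset V, p A * Y A ≤ Xs := by
    rw [← hQs, hXs, Finset.mul_sum]
    refine Finset.sum_le_sum fun u _ => ?_
    rw [Finset.mul_sum]
    refine Finset.sum_le_sum fun v _ => ?_
    by_cases hS : cutSep S u v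
    · simp only [if_pos hS]
      calc σ * (w u v * q u v) = w u v * (σ * q u v) := by ring
        _ ≤ w u v * ‖hat u - hat v‖ ^ 2 :=
          mul_le_mul_of_nonneg_left (hpq u v).1 (hnonneg u v)
    · simp [hS]
  -- Step B4 : upper bound on Xn
  have hXnZ : Xn ≤ σ * γ * ∑ A : Finset V, p A * Z A := by
    rw [← hQn, hXn, Finset.mul_sum]
    refine Finset.sum_le_sum fun u _ => ?_
    rw [Finset.mul_sum]
    refine Finset.sum_le_sum fun v _ => ?_
    by_cases hS : cutSep S u v
    · simp [hS]
    · simp only [if_neg hS]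
      calc w u v * ‖hat u - hat v‖ ^ 2 ≤ w u v * (σ * γ * q u v) :=
            mul_le_mul_of_nonneg_left (hpq u v).2 (hnonneg u v)
        _ = σ * γ * (w u v * q u v) := by ring
  -- Step C : stability, summed against p
  have hstab : ∀ A : Finset V, p A ≠ 0 → γ * Z A < Y A := by
    intro A hA
    obtain ⟨hAne, hAnu⟩ := hpA A hA
    have hT1 : symmDiff S A ≠ S := by
      intro hc
      exact hAne (by simpa using symmDiff_eq_left.mp hc)
    have hT2 : symmDiff S A ≠ Sᶜ := by
      intro hc
      have := congrArg (fun X => symmDiff S X) hc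
      simp only [symmDiff_symmDiff_cancel_left] at this
      apply hAnu
      rw [this]
      ext a; simp [Finset.mem_symmDiff]
    have hst := hstable (symmDiff S A) hT1 hT2
    have e1 : cutWeight w (fun u v => cutSep (symmDiff S A) u v ∧ ¬ cutSep S u v)
        = Z A / 2 := by
      rw [cutWeight_congr' w (Q := fun u v => cutSep A u v ∧ ¬ cutSep S u v)
        (fun u v => by simp only [cutSep, Finset.mem_symmDiff]; tauto),
        cutWeight_eq' w _, hZ]
    have e2 : cutWeight w (fun u v => cutSep S u v ∧ ¬ cutSep (symmDiff S A) u v)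
        = Y A / 2 := by
      rw [cutWeight_congr' w (Q := fun u v => cutSep S u v ∧ cutSep A u v)
        (fun u v => by simp only [cutSep, Finset.mem_symmDiff]; tauto),
        cutWeight_eq' w _, hY]
    rw [e1, e2] at hst
    linarith
  have hsum_lt : (∑ A : Finset V, p A * (γ * Z A)) < ∑ A : Finset V, p A * Y A := by
    obtain ⟨A0, -, hA0⟩ := Finset.exists_ne_zero_of_sum_ne_zero
      (by rw [hp1]; exact one_ne_zero : (∑ A : Finset V, p A) ≠ 0)
    refine Finset.sum_lt_sum (fun A _ => ?_) ⟨A0, Finset.mem_univ A0, ?_⟩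
    · by_cases hA : p A = 0
      · simp [hA]
      · exact mul_le_mul_of_nonneg_left (le_of_lt (hstab A hA)) (hp0 A)
    · exact mul_lt_mul_of_pos_left (hstab A0 hA0) (lt_of_le_of_ne (hp0 A0) (Ne.symm hA0))
  -- Step D : contradiction
  have hZsum : σ * γ * (∑ A : Finset V, p A * Z A) = σ * ∑ A : Finset V, p A * (γ * Z A) := by
    rw [Finset.mul_sum, Finset.mul_sum]
    exact Finset.sum_congr rfl fun A _ => by ring
  have hfinal : σ * (∑ A : Finset V, p A * Y A) < σ * (∑ A : Finset V, p A * Y A) := by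
    calc σ * (∑ A : Finset V, p A * Y A) ≤ Xs := hXsY
      _ ≤ Xn := hXsXn
      _ ≤ σ * γ * (∑ A : Finset V, p A * Z A) := hXnZ
      _ = σ * ∑ A : Finset V, p A * (γ * Z A) := hZsum
      _ < σ * (∑ A : Finset V, p A * Y A) := by
          exact mul_lt_mul_of_pos_left hsum_lt hσ
  exact absurd hfinal (lt_irrefl _)
end

section
/- Let (G=(V,w); s₁,…,s_k) be a Minimum Multiway Cut instance and let {x_u : u ∈ V} be a feasible solution of the CKR LP relaxation; write d(u,v) = ‖x_u − x_v‖₁/2. Then there exists a finitely supported probability distribution over functions f : V → {1,…,k} with f(s_i) = i for every i (i.e., over multiway cuts) such that for every pair of vertices u,v: Pr[f(u) ≠ f(v)] ≤ 2·d(u,v)/(1 + d(u,v)); in particular Pr[f(u) ≠ f(v)] ≤ 2·d(u,v) and Pr[f(u) = f(v)] ≥ (1 − d(u,v))/2. Moreover, if the LP solution is not integral, then the support of the distribution contains at least two distinct functions. -/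
open Finset

/-- `f : V → Fin k` is a multiway cut for terminals `s`: vertex `s i` lies in part `i`. -/
def IsMultiwayCut {V : Type*} {k : ℕ} (s : Fin k → V) (f : V → Fin k) : Prop :=
  ∀ i, f (s i) = i

/-- Feasibility for the CKR LP relaxation: each vertex is assigned a point of the standard
simplex in `ℝ^k`, and terminal `s i` is assigned the `i`-th standard basis vector. -/
def CKRFeasible {V : Type*} {k : ℕ} (s : Fin k → V) (x : V → Fin k → ℝ) : Prop :=
  (∀ u i, 0 ≤ x u i) ∧ (∀ u, ∑ i, x u i = 1) ∧ (∀ i, x (s i) = Pi.single i 1)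

set_option linter.unusedSectionVars false
set_option linter.unusedVariables false
section KT
variable {V : Type*} [Fintype V] {k : ℕ}

/-- All threshold values for coordinate `i`, together with `0`. -/
noncomputable def Tset (x : V → Fin k → ℝ) (i : Fin k) : Finset ℝ :=
  insert 0 ((Finset.univ : Finset V).image fun u => x u i)

lemma zero_mem_Tset (x : V → Fin k → ℝ) (i : Fin k) : (0:ℝ) ∈ Tset x i := by
  simp [Tset]

lemma val_mem_Tset (x : V → Fin k → ℝ) (i : Fin k) (u : V) : x u i ∈ Tset x i := by
  simp only [Tset, mem_insert, mem_image]
  exact Or.inr ⟨u, mem_univ u, rfl⟩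

noncomputable def prev (x : V → Fin k → ℝ) (i : Fin k) (t : ℝ) : ℝ :=
  if h : ((Tset x i).filter (fun r => r < t)).Nonempty
  then ((Tset x i).filter (fun r => r < t)).max' h else 0

noncomputable def gap (x : V → Fin k → ℝ) (i : Fin k) (t : ℝ) : ℝ := t - prev x i t

variable {x : V → Fin k → ℝ} {i : Fin k} {t : ℝ}

lemma filt_nonempty (ht : 0 < t) : ((Tset x i).filter (fun r => r < t)).Nonempty :=
  ⟨0, mem_filter.2 ⟨zero_mem_Tset x i, ht⟩⟩

lemma prev_mem (ht : 0 < t) : prev x i t ∈ Tset x i := by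
  rw [prev, dif_pos (filt_nonempty ht)]
  exact (mem_filter.1 (((Tset x i).filter (fun r => r < t)).max'_mem (filt_nonempty ht))).1

lemma prev_nonneg (ht : 0 < t) : 0 ≤ prev x i t := by
  rw [prev, dif_pos (filt_nonempty ht)]
  exact ((Tset x i).filter (fun r => r < t)).le_max' 0 (mem_filter.2 ⟨zero_mem_Tset x i, ht⟩)

lemma prev_lt (ht : 0 < t) : prev x i t < t := by
  rw [prev, dif_pos (filt_nonempty ht)]
  exact (mem_filter.1 (((Tset x i).filter (fun r => r < t)).max'_mem (filt_nonempty ht))).2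

lemma le_prev (ht : 0 < t) {r : ℝ} (hr : r ∈ Tset x i) (hrt : r < t) : r ≤ prev x i t := by
  rw [prev, dif_pos (filt_nonempty ht)]
  exact ((Tset x i).filter (fun r => r < t)).le_max' r (mem_filter.2 ⟨hr, hrt⟩)

lemma gap_nonneg (ht : 0 < t) : 0 ≤ gap x i t := by
  have := prev_lt (x := x) (i := i) ht; rw [gap]; linarith

/-- Telescoping sum of gaps. -/
lemma tele (x : V → Fin k → ℝ) (i : Fin k) :
    ∀ n : ℕ, ∀ c ∈ Tset x i, 0 ≤ c →
      ((Tset x i).filter (fun t => 0 < t ∧ t ≤ c)).card ≤ n →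
      ∑ t ∈ (Tset x i).filter (fun t => 0 < t ∧ t ≤ c), gap x i t = c := by
  intro n
  induction n with
  | zero =>
    intro c hc hc0 hcard
    have hF : (Tset x i).filter (fun t => 0 < t ∧ t ≤ c) = ∅ := card_eq_zero.1 (Nat.le_zero.1 hcard)
    rcases eq_or_lt_of_le hc0 with h | h
    · rw [hF]; simp [← h]
    · exact absurd hF (ne_empty_of_mem (mem_filter.2 ⟨hc, h, le_refl c⟩))
  | succ n ih =>
    intro c hc hc0 hcard
    rcases eq_or_lt_of_le hc0 with h | h
    · have hF : (Tset x i).filter (fun t => 0 < t ∧ t ≤ c) = ∅ := by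
        rw [eq_empty_iff_forall_notMem]
        intro t ht
        rcases mem_filter.1 ht with ⟨_, ht0, htc⟩
        rw [← h] at htc; linarith
      rw [hF]; simp [← h]
    · -- c > 0
      have hmem : c ∈ (Tset x i).filter (fun t => 0 < t ∧ t ≤ c) :=
        mem_filter.2 ⟨hc, h, le_refl c⟩
      have hsplit : (Tset x i).filter (fun t => 0 < t ∧ t ≤ c)
          = insert c ((Tset x i).filter (fun t => 0 < t ∧ t ≤ prev x i c)) := by
        ext t
        simp only [mem_filter, mem_insert]
        constructor
        · rintro ⟨hT, h0t, htc⟩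
          rcases eq_or_lt_of_le htc with h1 | h1
          · exact Or.inl h1
          · exact Or.inr ⟨hT, h0t, le_prev h hT h1⟩
        · rintro (rfl | ⟨hT, h0t, htp⟩)
          · exact ⟨hc, h, le_refl _⟩
          · exact ⟨hT, h0t, le_trans htp (le_of_lt (prev_lt h))⟩
      have hnot : c ∉ (Tset x i).filter (fun t => 0 < t ∧ t ≤ prev x i c) := by
        intro hcm
        have := (mem_filter.1 hcm).2.2
        have := prev_lt (x := x) (i := i) h
        linarith
      have hcard' : ((Tset x i).filter (fun t => 0 < t ∧ t ≤ prev x i c)).card ≤ n := by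
        have := hcard
        rw [hsplit, card_insert_of_notMem hnot] at this
        omega
      rw [hsplit, sum_insert hnot, ih (prev x i c) (prev_mem h) (prev_nonneg h) hcard']
      rw [gap]; ring


/-- Max of coordinate `i` over `U` (at least `0`). -/
noncomputable def Mx (x : V → Fin k → ℝ) (i : Fin k) (U : Finset V) : ℝ :=
  (insert (0:ℝ) (U.image fun u => x u i)).max' (insert_nonempty _ _)

noncomputable def cuts (x : V → Fin k → ℝ) (i : Fin k) (U : Finset V) : Finset ℝ :=
  (Tset x i).filter (fun t => 0 < t ∧ t ≤ Mx x i U)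

lemma Mx_nonneg (x : V → Fin k → ℝ) (i : Fin k) (U : Finset V) : 0 ≤ Mx x i U :=
  le_max' _ 0 (mem_insert_self _ _)

lemma le_Mx {u : V} {U : Finset V} (hu : u ∈ U) : x u i ≤ Mx x i U := by
  unfold Mx
  exact (insert (0:ℝ) (U.image fun u => x u i)).le_max' (x u i)
    (mem_insert_of_mem (mem_image_of_mem _ hu))

lemma Mx_mem_Tset (x : V → Fin k → ℝ) (i : Fin k) (U : Finset V) : Mx x i U ∈ Tset x i := by
  have h := max'_mem (insert (0:ℝ) (U.image fun u => x u i)) (insert_nonempty _ _)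
  rw [Mx]
  rcases mem_insert.1 h with h | h
  · rw [h]; exact zero_mem_Tset x i
  · rcases mem_image.1 h with ⟨u, _, hu⟩
    rw [← hu]; exact val_mem_Tset x i u

/-- Attaining the max: if `U` is nonempty and `Mx > 0` then some `u ∈ U` attains it. -/
lemma Mx_attained {U : Finset V} {t : ℝ} (ht : 0 < t) (htM : t ≤ Mx x i U) :
    ∃ u ∈ U, t ≤ x u i := by
  have h := max'_mem (insert (0:ℝ) (U.image fun u => x u i)) (insert_nonempty _ _)
  rcases mem_insert.1 h with h | h
  · rw [Mx] at htM; rw [h] at htM; linarith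
  · rcases mem_image.1 h with ⟨u, hu, hux⟩
    exact ⟨u, hu, hux ▸ htM⟩

/-- Key partial-sum identity over `cuts`. -/
lemma sum_gap_indicator {U : Finset V} {c : ℝ} (hc : c ∈ Tset x i) (hc0 : 0 ≤ c)
    (hcM : c ≤ Mx x i U) :
    ∑ t ∈ cuts x i U, gap x i t * (if t ≤ c then 1 else 0) = c := by
  have h1 : ∑ t ∈ cuts x i U, gap x i t * (if t ≤ c then 1 else 0)
      = ∑ t ∈ (cuts x i U).filter (fun t => t ≤ c), gap x i t := by
    rw [sum_filter]
    exact sum_congr rfl (fun t _ => mul_boole _ _)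
  have h2 : (cuts x i U).filter (fun t => t ≤ c) = (Tset x i).filter (fun t => 0 < t ∧ t ≤ c) := by
    rw [cuts, filter_filter]
    ext t
    simp only [mem_filter]
    constructor
    · rintro ⟨hT, ⟨h0, _⟩, h2⟩; exact ⟨hT, h0, h2⟩
    · rintro ⟨hT, h0, h2⟩; exact ⟨hT, ⟨h0, le_trans h2 hcM⟩, h2⟩
  rw [h1, h2, tele x i ((Tset x i).filter (fun t => 0 < t ∧ t ≤ c)).card c hc hc0 le_rfl]

lemma sum_gap_cuts (x : V → Fin k → ℝ) (i : Fin k) (U : Finset V) :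
    ∑ t ∈ cuts x i U, gap x i t = Mx x i U := by
  have h := sum_gap_indicator (x := x) (i := i) (U := U) (Mx_mem_Tset x i U)
    (Mx_nonneg x i U) le_rfl
  rw [← h]
  apply sum_congr rfl
  intro t htc
  rcases mem_filter.1 htc with ⟨_, _, h2⟩
  rw [if_pos h2, mul_one]

lemma gap_nonneg_cuts {U : Finset V} {t : ℝ} (ht : t ∈ cuts x i U) : 0 ≤ gap x i t :=
  gap_nonneg (mem_filter.1 ht).2.1


lemma card_filter_lt {x : V → Fin k → ℝ} {U : Finset V} {i : Fin k} {t : ℝ}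
    (ht : t ∈ cuts x i U) :
    (U.filter (fun a => ¬ t ≤ x a i)).card < U.card := by
  rcases mem_filter.1 ht with ⟨_, ht0, htM⟩
  rcases Mx_attained ht0 htM with ⟨u, hu, hux⟩
  apply card_lt_card
  constructor
  · exact filter_subset _ _
  · intro hsub
    have := mem_filter.1 (hsub hu)
    exact this.2 hux

variable [DecidableEq V]

/-- The Kleinberg–Tardos rounding process distribution (unnormalized off `U`):
`P x U f` is `k ^ |V \ U|` times the probability that the process on the
unassigned set `U` produces labels agreeing with `f` on `U`. -/
noncomputable def P (x : V → Fin k → ℝ) (U : Finset V) (f : V → Fin k) : ℝ :=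
  if hU : U = ∅ then 1
  else (∑ i : Fin k, ∑ t ∈ (cuts x i U).attach,
      gap x i t.1 * (if ∀ a ∈ U, t.1 ≤ x a i → f a = i
        then P x (U.filter (fun a => ¬ t.1 ≤ x a i)) f else 0)) / ∑ i, Mx x i U
termination_by U.card
decreasing_by exact card_filter_lt t.2

variable {x : V → Fin k → ℝ}

lemma P_empty (f : V → Fin k) : P x ∅ f = 1 := by rw [P]; simp

lemma P_apply {U : Finset V} (hU : U ≠ ∅) (f : V → Fin k) :
    P x U f = (∑ i : Fin k, ∑ t ∈ cuts x i U,
      gap x i t * (if ∀ a ∈ U, t ≤ x a i → f a = i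
        then P x (U.filter (fun a => ¬ t ≤ x a i)) f else 0)) / ∑ i, Mx x i U := by
  rw [P, dif_neg hU]
  congr 1
  exact sum_congr rfl fun i _ => sum_attach (cuts x i U) fun t =>
    gap x i t * (if ∀ a ∈ U, t ≤ x a i → f a = i
      then P x (U.filter (fun a => ¬ t ≤ x a i)) f else 0)

lemma P_nonneg : ∀ n (U : Finset V), U.card ≤ n → ∀ f, 0 ≤ P x U f := by
  intro n
  induction n with
  | zero =>
    intro U hU f
    rw [card_eq_zero.1 (Nat.le_zero.1 hU), P_empty]
    norm_num
  | succ n ih =>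
    intro U hU f
    by_cases hUe : U = ∅
    · rw [hUe, P_empty]; norm_num
    · rw [P_apply hUe]
      apply div_nonneg
      · apply sum_nonneg; intro i _
        apply sum_nonneg; intro t ht
        apply mul_nonneg (gap_nonneg_cuts ht)
        split
        · exact ih _ (by have := card_filter_lt ht; omega) f
        · exact le_refl 0
      · exact sum_nonneg fun i _ => Mx_nonneg x i U

lemma P_nonneg' (U : Finset V) (f : V → Fin k) : 0 ≤ P x U f :=
  P_nonneg U.card U le_rfl f



lemma P_update : ∀ n (U : Finset V), U.card ≤ n → ∀ (f : V → Fin k) (b : V) (j : Fin k),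
    b ∉ U → P x U (Function.update f b j) = P x U f := by
  intro n
  induction n with
  | zero =>
    intro U hU f b j hb
    rw [card_eq_zero.1 (Nat.le_zero.1 hU), P_empty, P_empty]
  | succ n ih =>
    intro U hU f b j hb
    by_cases hUe : U = ∅
    · rw [hUe, P_empty, P_empty]
    · rw [P_apply hUe, P_apply hUe]
      congr 1
      apply sum_congr rfl
      intro i _
      apply sum_congr rfl
      intro t ht
      congr 1
      have hcond : (∀ a ∈ U, t ≤ x a i → Function.update f b j a = i)
          ↔ (∀ a ∈ U, t ≤ x a i → f a = i) := by
        constructor <;> intro h a ha hta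
        · have := h a ha hta
          rwa [Function.update_of_ne (ne_of_mem_of_not_mem ha hb) j f] at this
        · rw [Function.update_of_ne (ne_of_mem_of_not_mem ha hb) j f]
          exact h a ha hta
      by_cases hc : ∀ a ∈ U, t ≤ x a i → f a = i
      · rw [if_pos hc, if_pos (hcond.2 hc)]
        exact ih _ (by have := card_filter_lt ht; omega) f b j
          (fun hbf => hb (mem_filter.1 hbf).1)
      · rw [if_neg hc, if_neg (fun h => hc (hcond.1 h))]


/-- Peeling one coordinate: if `h` is invariant under updates at `b`, constraining `f b = i`
scales the sum by `1/k`. -/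
lemma sum_update_invariant {b : V} {h : (V → Fin k) → ℝ}
    (hh : ∀ f j, h (Function.update f b j) = h f) (i : Fin k) :
    (k : ℝ) * ∑ f : V → Fin k, (if f b = i then h f else 0) = ∑ f : V → Fin k, h f := by
  have key : ∀ j : Fin k, ∑ f : V → Fin k, (if f b = j then h f else 0)
      = ∑ f : V → Fin k, (if f b = i then h f else 0) := by
    intro j
    set σ := Equiv.swap i j with hσ
    have hinv : Function.Involutive (fun f : V → Fin k => Function.update f b (σ (f b))) := by
      intro f
      simp only [Function.update_self]
      rw [Equiv.swap_apply_self]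
      exact Function.update_eq_self b f ▸ (by rw [Function.update_idem, Function.update_eq_self])
    apply Fintype.sum_bijective _ hinv.bijective
    intro f
    simp only [Function.update_self]
    rw [hh]
    by_cases hf : f b = j
    · have hσi : σ (f b) = i := by rw [hf]; exact Equiv.swap_apply_right i j
      rw [if_pos hf, if_pos hσi]
    · have hσi : ¬ σ (f b) = i := by
        intro hc
        apply hf
        have h2 := congrArg σ hc
        rwa [Equiv.swap_apply_self, Equiv.swap_apply_left] at h2
      rw [if_neg hf, if_neg hσi]
  have expand : ∑ f : V → Fin k, h f
      = ∑ j : Fin k, ∑ f : V → Fin k, (if f b = j then h f else 0) := by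
    rw [Finset.sum_comm]
    apply sum_congr rfl
    intro f _
    rw [Finset.sum_ite_eq (univ : Finset (Fin k)) (f b) (fun _ => h f)]
    simp
  rw [expand, sum_congr rfl (fun j _ => key j), sum_const, card_univ, Fintype.card_fin,
    nsmul_eq_mul]

/-- Projection: constraining `f = i` on a set `B` where `h` is insensitive
scales the sum by `(1/k)^|B|`. -/
lemma sum_restrict (B : Finset V) (i : Fin k) (h : (V → Fin k) → ℝ)
    (hinv : ∀ b ∈ B, ∀ f j, h (Function.update f b j) = h f) :
    (k : ℝ) ^ B.card * ∑ f : V → Fin k, (if ∀ a ∈ B, f a = i then h f else 0)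
      = ∑ f : V → Fin k, h f := by
  induction B using Finset.induction_on with
  | empty => simp
  | insert b B hb hB =>
    have hsplit : ∀ f : V → Fin k,
        (if ∀ a ∈ insert b B, f a = i then h f else 0)
        = (if f b = i then (if ∀ a ∈ B, f a = i then h f else 0) else 0) := by
      intro f
      by_cases h1 : f b = i <;> by_cases h2 : ∀ a ∈ B, f a = i
      · rw [if_pos h1, if_pos h2, if_pos (fun a ha => by
          rcases mem_insert.1 ha with rfl | ha'
          · exact h1
          · exact h2 a ha')]
      · rw [if_pos h1, if_neg h2, if_neg (fun hc => h2 (fun a ha => hc a (mem_insert_of_mem ha)))]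
      · rw [if_neg h1, if_neg (fun hc => h1 (hc b (mem_insert_self b B)))]
      · rw [if_neg h1, if_neg (fun hc => h1 (hc b (mem_insert_self b B)))]
    have hinv' : ∀ f j, (if ∀ a ∈ B, (Function.update f b j) a = i
        then h (Function.update f b j) else 0) = (if ∀ a ∈ B, f a = i then h f else 0) := by
      intro f j
      have hcond : (∀ a ∈ B, (Function.update f b j) a = i) ↔ (∀ a ∈ B, f a = i) := by
        constructor <;> intro hc a ha
        · have := hc a ha
          rwa [Function.update_of_ne (ne_of_mem_of_not_mem ha hb) j f] at this
        · rw [Function.update_of_ne (ne_of_mem_of_not_mem ha hb) j f]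
          exact hc a ha
      by_cases h2 : ∀ a ∈ B, f a = i
      · rw [if_pos h2, if_pos (hcond.2 h2), hinv b (mem_insert_self b B) f j]
      · rw [if_neg h2, if_neg (fun hc => h2 (hcond.1 hc))]
    rw [card_insert_of_notMem hb, pow_succ, sum_congr rfl (fun f _ => hsplit f)]
    have hkey := sum_update_invariant (b := b)
      (h := fun f => if ∀ a ∈ B, f a = i then h f else 0) hinv' i
    calc ((k:ℝ)^B.card * (k:ℝ)) *
          ∑ f : V → Fin k, (if f b = i then (if ∀ a ∈ B, f a = i then h f else 0) else 0)
        = (k:ℝ)^B.card * ((k:ℝ) *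
          ∑ f : V → Fin k, (if f b = i then (if ∀ a ∈ B, f a = i then h f else 0) else 0)) := by
          ring
      _ = (k:ℝ)^B.card * ∑ f : V → Fin k, (if ∀ a ∈ B, f a = i then h f else 0) := by
          rw [hkey]
      _ = ∑ f : V → Fin k, h f := hB (fun a ha => hinv a (mem_insert_of_mem ha))


lemma one_le_sum_Mx (hx1 : ∀ u, ∑ i, x u i = 1) {U : Finset V} (hU : U.Nonempty) :
    (1:ℝ) ≤ ∑ i, Mx x i U := by
  obtain ⟨u, hu⟩ := hU
  rw [← hx1 u]
  exact sum_le_sum fun i _ => le_Mx hu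

lemma card_sdiff_filter (U : Finset V) (p : V → Prop) [DecidablePred p] :
    (univ \ (U.filter (fun a => ¬ p a))).card = (univ \ U).card + (U.filter p).card := by
  have hset : univ \ (U.filter (fun a => ¬ p a)) = (univ \ U) ∪ U.filter p := by
    ext a
    simp only [mem_sdiff, mem_union, mem_filter, mem_univ, true_and]
    tauto
  have hdisj : Disjoint (univ \ U) (U.filter p) :=
    disjoint_left.2 (fun {a} ha hb => (mem_sdiff.1 ha).2 (mem_filter.1 hb).1)
  rw [hset, card_union_of_disjoint hdisj]

lemma sum_P_eq (hx1 : ∀ u, ∑ i, x u i = 1) :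
    ∀ n (U : Finset V), U.card ≤ n →
      ∑ f : V → Fin k, P x U f = (k:ℝ) ^ ((univ \ U).card) := by
  intro n
  induction n with
  | zero =>
    intro U hU
    rw [card_eq_zero.1 (Nat.le_zero.1 hU)]
    simp [P_empty, card_univ, Fintype.card_fun]
  | succ n ih =>
    intro U hUc
    by_cases hUe : U = ∅
    · rw [hUe]; simp [P_empty, card_univ, Fintype.card_fun]
    · have hne : U.Nonempty := nonempty_iff_ne_empty.2 hUe
      obtain ⟨u₀, hu₀⟩ := hne
      have hk : (k:ℝ) ≠ 0 := by
        have h1 := hx1 u₀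
        intro h0
        have hk0 : k = 0 := by exact_mod_cast h0
        subst hk0
        simp at h1
      have hD : (1:ℝ) ≤ ∑ i, Mx x i U := one_le_sum_Mx hx1 ⟨u₀, hu₀⟩
      have hDne : (∑ i, Mx x i U) ≠ 0 := by linarith
      have hstep : ∀ i : Fin k, ∀ t ∈ cuts x i U,
          ∑ f : V → Fin k, (if ∀ a ∈ U, t ≤ x a i → f a = i
            then P x (U.filter (fun a => ¬ t ≤ x a i)) f else 0)
          = (k:ℝ) ^ ((univ \ U).card) := by
        intro i t ht
        set U' := U.filter (fun a => ¬ t ≤ x a i) with hU'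
        set B := U.filter (fun a => t ≤ x a i) with hBdef
        have hcond : ∀ f : V → Fin k,
            (∀ a ∈ U, t ≤ x a i → f a = i) ↔ (∀ a ∈ B, f a = i) := by
          intro f
          constructor
          · intro h a ha
            rcases mem_filter.1 ha with ⟨haU, hat⟩
            exact h a haU hat
          · intro h a ha hat
            exact h a (mem_filter.2 ⟨ha, hat⟩)
        have hinv : ∀ b ∈ B, ∀ f j, P x U' (Function.update f b j) = P x U' f := by
          intro b hb f j
          apply P_update U'.card U' le_rfl
          intro hbU'
          exact (mem_filter.1 hbU').2 (mem_filter.1 hb).2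
        have hrestrict := sum_restrict B i (P x U') hinv
        have hcards : (univ \ U').card = (univ \ U).card + B.card :=
          card_sdiff_filter U (fun a => t ≤ x a i)
        have hcardlt : U'.card ≤ n := by
          have hlt : U'.card < U.card := by rw [hU']; exact card_filter_lt ht
          omega
        have hsum' : ∑ f : V → Fin k, P x U' f = (k:ℝ)^((univ \ U').card) := ih U' hcardlt
        have hconv : ∑ f : V → Fin k, (if ∀ a ∈ U, t ≤ x a i → f a = i then P x U' f else 0)
            = ∑ f : V → Fin k, (if ∀ a ∈ B, f a = i then P x U' f else 0) :=
          sum_congr rfl fun f _ => if_congr (hcond f) rfl rfl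
        rw [hconv]
        have hkB : (k:ℝ)^B.card ≠ 0 := pow_ne_zero _ hk
        rw [hsum', hcards, pow_add] at hrestrict
        exact mul_left_cancel₀ hkB (by rw [hrestrict]; ring)
      calc ∑ f : V → Fin k, P x U f
          = ∑ f : V → Fin k, (∑ i : Fin k, ∑ t ∈ cuts x i U,
              gap x i t * (if ∀ a ∈ U, t ≤ x a i → f a = i
                then P x (U.filter (fun a => ¬ t ≤ x a i)) f else 0)) / (∑ i, Mx x i U) :=
            sum_congr rfl fun f _ => P_apply hUe f
        _ = (∑ i : Fin k, ∑ t ∈ cuts x i U, gap x i t * (k:ℝ)^((univ \ U).card))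
            / (∑ i, Mx x i U) := by
            rw [← sum_div]
            congr 1
            rw [Finset.sum_comm]
            apply sum_congr rfl
            intro i _
            rw [Finset.sum_comm]
            apply sum_congr rfl
            intro t ht
            rw [← mul_sum, hstep i t ht]
        _ = ((∑ i : Fin k, Mx x i U) * (k:ℝ)^((univ \ U).card)) / (∑ i, Mx x i U) := by
            congr 1
            calc ∑ i : Fin k, ∑ t ∈ cuts x i U, gap x i t * (k:ℝ)^((univ \ U).card)
                = ∑ i : Fin k, (Mx x i U * (k:ℝ)^((univ \ U).card)) :=
                  sum_congr rfl fun i _ => by rw [← sum_mul, sum_gap_cuts]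
              _ = (∑ i : Fin k, Mx x i U) * (k:ℝ)^((univ \ U).card) := by rw [sum_mul]
        _ = (k:ℝ)^((univ \ U).card) := by
            rw [mul_comm, mul_div_assoc, div_self hDne, mul_one]


lemma k_pos_of_vertex (hx1 : ∀ u, ∑ i, x u i = 1) (u : V) : (0:ℝ) < (k:ℝ) := by
  have h1 := hx1 u
  rcases Nat.eq_zero_or_pos k with hk | hk
  · subst hk; simp at h1
  · exact_mod_cast hk

lemma min_mem_Tset (u v : V) (i : Fin k) : min (x u i) (x v i) ∈ Tset x i := by
  rcases min_choice (x u i) (x v i) with h | h <;> rw [h]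
  · exact val_mem_Tset x i u
  · exact val_mem_Tset x i v

lemma max_mem_Tset (u v : V) (i : Fin k) : max (x u i) (x v i) ∈ Tset x i := by
  rcases max_choice (x u i) (x v i) with h | h <;> rw [h]
  · exact val_mem_Tset x i u
  · exact val_mem_Tset x i v

/-- The conditional sum over one step outcome. -/
lemma sum_cond_P (hx1 : ∀ u, ∑ i, x u i = 1) {U : Finset V} {i : Fin k} {t : ℝ}
    (ht : t ∈ cuts x i U) :
    ∑ f : V → Fin k, (if ∀ a ∈ U, t ≤ x a i → f a = i
      then P x (U.filter (fun a => ¬ t ≤ x a i)) f else 0)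
    = (k:ℝ) ^ ((univ \ U).card) := by
  rcases mem_filter.1 ht with ⟨_, ht0, htM⟩
  obtain ⟨u₀, hu₀, _⟩ := Mx_attained ht0 htM
  have hk : (k:ℝ) ≠ 0 := ne_of_gt (k_pos_of_vertex hx1 u₀)
  set U' := U.filter (fun a => ¬ t ≤ x a i) with hU'
  set B := U.filter (fun a => t ≤ x a i) with hBdef
  have hcond : ∀ f : V → Fin k,
      (∀ a ∈ U, t ≤ x a i → f a = i) ↔ (∀ a ∈ B, f a = i) := by
    intro f
    constructor
    · intro h a ha
      rcases mem_filter.1 ha with ⟨haU, hat⟩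
      exact h a haU hat
    · intro h a ha hat
      exact h a (mem_filter.2 ⟨ha, hat⟩)
  have hinv : ∀ b ∈ B, ∀ f j, P x U' (Function.update f b j) = P x U' f := by
    intro b hb f j
    apply P_update U'.card U' le_rfl
    intro hbU'
    exact (mem_filter.1 hbU').2 (mem_filter.1 hb).2
  have hrestrict := sum_restrict B i (P x U') hinv
  have hcards : (univ \ U').card = (univ \ U).card + B.card :=
    card_sdiff_filter U (fun a => t ≤ x a i)
  have hsum' : ∑ f : V → Fin k, P x U' f = (k:ℝ)^((univ \ U').card) :=
    sum_P_eq hx1 U'.card U' le_rfl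
  have hconv : ∑ f : V → Fin k, (if ∀ a ∈ U, t ≤ x a i → f a = i then P x U' f else 0)
      = ∑ f : V → Fin k, (if ∀ a ∈ B, f a = i then P x U' f else 0) :=
    sum_congr rfl fun f _ => if_congr (hcond f) rfl rfl
  rw [hconv]
  have hkB : (k:ℝ)^B.card ≠ 0 := pow_ne_zero _ hk
  rw [hsum', hcards, pow_add] at hrestrict
  exact mul_left_cancel₀ hkB (by rw [hrestrict]; ring)

/-- Terminals always receive their own label on the support. -/
lemma P_terminal (s : Fin k → V) (hxs : ∀ i, x (s i) = Pi.single i 1) :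
    ∀ n (U : Finset V), U.card ≤ n → ∀ f, P x U f ≠ 0 → ∀ i₀, s i₀ ∈ U → f (s i₀) = i₀ := by
  intro n
  induction n with
  | zero =>
    intro U hU f _ i₀ hsU
    rw [card_eq_zero.1 (Nat.le_zero.1 hU)] at hsU
    exact absurd hsU (notMem_empty _)
  | succ n ih =>
    intro U hUc f hPf i₀ hsU
    have hUe : U ≠ ∅ := fun h => notMem_empty _ (h ▸ hsU)
    rw [P_apply hUe] at hPf
    have hnum : (∑ i : Fin k, ∑ t ∈ cuts x i U,
        gap x i t * (if ∀ a ∈ U, t ≤ x a i → f a = i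
          then P x (U.filter (fun a => ¬ t ≤ x a i)) f else 0)) ≠ 0 := by
      intro h0
      rw [h0, zero_div] at hPf
      exact hPf rfl
    obtain ⟨i, _, hi⟩ := exists_ne_zero_of_sum_ne_zero hnum
    obtain ⟨t, htc, hterm⟩ := exists_ne_zero_of_sum_ne_zero hi
    have hcond : ∀ a ∈ U, t ≤ x a i → f a = i := by
      by_contra hc
      rw [if_neg hc, mul_zero] at hterm
      exact hterm rfl
    have hP' : P x (U.filter (fun a => ¬ t ≤ x a i)) f ≠ 0 := by
      intro h0
      rw [if_pos hcond, h0, mul_zero] at hterm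
      exact hterm rfl
    have ht0 : 0 < t := (mem_filter.1 htc).2.1
    by_cases hts : t ≤ x (s i₀) i
    · have hii : i = i₀ := by
        by_contra hne
        have : x (s i₀) i = 0 := by
          rw [hxs i₀]
          exact Pi.single_eq_of_ne hne 1
        rw [this] at hts
        linarith
      subst hii
      exact hcond _ hsU hts
    · have hcard : (U.filter (fun a => ¬ t ≤ x a i)).card ≤ n := by
        have := card_filter_lt htc
        omega
      exact ih _ hcard f hP' i₀ (mem_filter.2 ⟨hsU, hts⟩)


/-- The main per-pair estimate: separation probability is at most `2d/(1+d)`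
(in the form `∑|xu−xv| / ∑max(xu,xv)`), scaled by the off-`U` factor. -/
lemma P_pair (hx0 : ∀ u i, 0 ≤ x u i) (hx1 : ∀ u, ∑ i, x u i = 1) (u v : V) :
    ∀ n (U : Finset V), U.card ≤ n → u ∈ U → v ∈ U →
      ∑ f : V → Fin k, P x U f * (if f u ≠ f v then 1 else 0)
        ≤ (∑ i, |x u i - x v i|) / (∑ i, max (x u i) (x v i))
            * (k:ℝ) ^ ((univ \ U).card) := by
  have hk0 : (0:ℝ) < k := k_pos_of_vertex hx1 u
  have hSm1 : (1:ℝ) ≤ ∑ i, max (x u i) (x v i) := by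
    rw [← hx1 u]
    exact sum_le_sum fun i _ => le_max_left _ _
  have hSm0 : (0:ℝ) < ∑ i, max (x u i) (x v i) := lt_of_lt_of_le one_pos hSm1
  have hDd0 : (0:ℝ) ≤ ∑ i, |x u i - x v i| := sum_nonneg fun i _ => abs_nonneg _
  intro n
  induction n with
  | zero =>
    intro U hU hu hv
    rw [card_eq_zero.1 (Nat.le_zero.1 hU)] at hu
    exact absurd hu (notMem_empty _)
  | succ n ih =>
    intro U hUc hu hv
    have hUe : U ≠ ∅ := fun h => notMem_empty _ (h ▸ hu)
    have hD1 : (1:ℝ) ≤ ∑ i, Mx x i U := one_le_sum_Mx hx1 ⟨u, hu⟩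
    have hD0 : (0:ℝ) < ∑ i, Mx x i U := lt_of_lt_of_le one_pos hD1
    set R := (∑ i, |x u i - x v i|) / (∑ i, max (x u i) (x v i)) with hRdef
    have hR0 : (0:ℝ) ≤ R := div_nonneg hDd0 (le_of_lt hSm0)
    set K := (k:ℝ) ^ ((univ \ U).card) with hKdef
    have hK0 : (0:ℝ) < K := pow_pos hk0 _
    have hχ0 : ∀ f : V → Fin k, (0:ℝ) ≤ (if f u ≠ f v then (1:ℝ) else 0) := by
      intro f; split <;> norm_num
    have hχ1 : ∀ f : V → Fin k, (if f u ≠ f v then (1:ℝ) else 0) ≤ 1 := by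
      intro f; split <;> norm_num
    -- per-outcome bound
    have hterm : ∀ i : Fin k, ∀ t ∈ cuts x i U,
        ∑ f : V → Fin k, (if ∀ a ∈ U, t ≤ x a i → f a = i
            then P x (U.filter (fun a => ¬ t ≤ x a i)) f else 0)
          * (if f u ≠ f v then (1:ℝ) else 0)
        ≤ K * (((if t ≤ max (x u i) (x v i) then (1:ℝ) else 0)
              - (if t ≤ min (x u i) (x v i) then (1:ℝ) else 0))
            + (1 - (if t ≤ max (x u i) (x v i) then (1:ℝ) else 0)) * R) := by
      intro i t ht
      have hite0 : ∀ f : V → Fin k,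
          (0:ℝ) ≤ (if ∀ a ∈ U, t ≤ x a i → f a = i
            then P x (U.filter (fun a => ¬ t ≤ x a i)) f else 0) := by
        intro f; split
        · exact P_nonneg' _ _
        · exact le_rfl
      by_cases hu' : t ≤ x u i <;> by_cases hv' : t ≤ x v i
      · -- both caught: separation impossible
        have hzero : ∑ f : V → Fin k, (if ∀ a ∈ U, t ≤ x a i → f a = i
            then P x (U.filter (fun a => ¬ t ≤ x a i)) f else 0)
            * (if f u ≠ f v then (1:ℝ) else 0) = 0 := by
          apply sum_eq_zero
          intro f _
          by_cases hc : ∀ a ∈ U, t ≤ x a i → f a = i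
          · rw [if_pos hc, if_neg (by rw [hc u hu hu', hc v hv hv']; exact fun h => h rfl),
              mul_zero]
          · rw [if_neg hc, zero_mul]
        rw [hzero, if_pos (le_trans hu' (le_max_left _ _)), if_pos (le_min hu' hv')]
        nlinarith [hK0, hR0]
      · -- u caught, v not
        have hle : ∑ f : V → Fin k, (if ∀ a ∈ U, t ≤ x a i → f a = i
            then P x (U.filter (fun a => ¬ t ≤ x a i)) f else 0)
            * (if f u ≠ f v then (1:ℝ) else 0) ≤ K := by
          rw [hKdef]
          rw [← sum_cond_P hx1 ht]
          apply sum_le_sum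
          intro f _
          exact mul_le_of_le_one_right (hite0 f) (hχ1 f)
        rw [if_pos (le_trans hu' (le_max_left _ _)),
          if_neg (fun hm => hv' (le_trans hm (min_le_right _ _)))]
        calc _ ≤ K := hle
          _ = K * ((1 - 0) + (1 - 1) * R) := by ring
      · -- v caught, u not
        have hle : ∑ f : V → Fin k, (if ∀ a ∈ U, t ≤ x a i → f a = i
            then P x (U.filter (fun a => ¬ t ≤ x a i)) f else 0)
            * (if f u ≠ f v then (1:ℝ) else 0) ≤ K := by
          rw [hKdef]
          rw [← sum_cond_P hx1 ht]
          apply sum_le_sum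
          intro f _
          exact mul_le_of_le_one_right (hite0 f) (hχ1 f)
        rw [if_pos (le_trans hv' (le_max_right _ _)),
          if_neg (fun hm => hu' (le_trans hm (min_le_left _ _)))]
        calc _ ≤ K := hle
          _ = K * ((1 - 0) + (1 - 1) * R) := by ring
      · -- neither caught: recurse
        set U' := U.filter (fun a => ¬ t ≤ x a i) with hU'
        set B := U.filter (fun a => t ≤ x a i) with hBdef
        have hu'' : u ∈ U' := mem_filter.2 ⟨hu, hu'⟩
        have hv'' : v ∈ U' := mem_filter.2 ⟨hv, hv'⟩
        have hcond : ∀ f : V → Fin k,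
            (∀ a ∈ U, t ≤ x a i → f a = i) ↔ (∀ a ∈ B, f a = i) := by
          intro f
          constructor
          · intro h a ha
            rcases mem_filter.1 ha with ⟨haU, hat⟩
            exact h a haU hat
          · intro h a ha hat
            exact h a (mem_filter.2 ⟨ha, hat⟩)
        have hbne : ∀ b ∈ B, b ≠ u ∧ b ≠ v := by
          intro b hb
          rcases mem_filter.1 hb with ⟨_, hbt⟩
          constructor
          · rintro rfl; exact hu' hbt
          · rintro rfl; exact hv' hbt
        have hinv : ∀ b ∈ B, ∀ (f : V → Fin k) (j : Fin k),
            P x U' (Function.update f b j) *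
              (if Function.update f b j u ≠ Function.update f b j v then (1:ℝ) else 0)
            = P x U' f * (if f u ≠ f v then (1:ℝ) else 0) := by
          intro b hb f j
          rcases hbne b hb with ⟨hbu, hbv⟩
          rw [Function.update_of_ne (Ne.symm hbu), Function.update_of_ne (Ne.symm hbv)]
          congr 1
          apply P_update U'.card U' le_rfl
          intro hbU'
          exact (mem_filter.1 hbU').2 (mem_filter.1 hb).2
        have hrestrict := sum_restrict B i
          (fun f => P x U' f * (if f u ≠ f v then (1:ℝ) else 0)) hinv
        have hcards : (univ \ U').card = (univ \ U).card + B.card :=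
          card_sdiff_filter U (fun a => t ≤ x a i)
        have hcardlt : U'.card ≤ n := by
          have hlt : U'.card < U.card := by rw [hU']; exact card_filter_lt ht
          omega
        have hih := ih U' hcardlt hu'' hv''
        have hconv : ∑ f : V → Fin k, (if ∀ a ∈ U, t ≤ x a i → f a = i
              then P x U' f else 0) * (if f u ≠ f v then (1:ℝ) else 0)
            = ∑ f : V → Fin k, (if ∀ a ∈ B, f a = i
              then P x U' f * (if f u ≠ f v then (1:ℝ) else 0) else 0) := by
          apply sum_congr rfl
          intro f _
          rw [ite_mul, zero_mul]
          exact if_congr (hcond f) rfl rfl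
        rw [hconv]
        have hpow : (0:ℝ) < (k:ℝ) ^ B.card := pow_pos hk0 _
        have hmain : (k:ℝ) ^ B.card *
            ∑ f : V → Fin k, (if ∀ a ∈ B, f a = i
              then P x U' f * (if f u ≠ f v then (1:ℝ) else 0) else 0)
            ≤ (k:ℝ) ^ B.card * (K * R) := by
          rw [hrestrict]
          calc ∑ f : V → Fin k, P x U' f * (if f u ≠ f v then (1:ℝ) else 0)
              ≤ R * (k:ℝ) ^ ((univ \ U').card) := hih
            _ = (k:ℝ) ^ B.card * (K * R) := by
                rw [hcards, pow_add, hKdef]; ring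
        have hfin := le_of_mul_le_mul_left hmain hpow
        rw [if_neg (fun hm => (le_max_iff.1 hm).elim hu' hv'),
          if_neg (fun hm => hu' (le_trans hm (min_le_left _ _)))]
        calc _ ≤ K * R := hfin
          _ = K * ((0 - 0) + (1 - 0) * R) := by ring
    -- assemble
    have hmax : ∀ i : Fin k, ∑ t ∈ cuts x i U,
        gap x i t * (if t ≤ max (x u i) (x v i) then (1:ℝ) else 0)
        = max (x u i) (x v i) := fun i =>
      sum_gap_indicator (max_mem_Tset u v i) (le_trans (hx0 u i) (le_max_left _ _))
        (max_le (le_Mx hu) (le_Mx hv))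
    have hmin : ∀ i : Fin k, ∑ t ∈ cuts x i U,
        gap x i t * (if t ≤ min (x u i) (x v i) then (1:ℝ) else 0)
        = min (x u i) (x v i) := fun i =>
      sum_gap_indicator (min_mem_Tset u v i) (le_min (hx0 u i) (hx0 v i))
        (le_trans (min_le_left _ _) (le_Mx hu))
    calc ∑ f : V → Fin k, P x U f * (if f u ≠ f v then (1:ℝ) else 0)
        = (∑ i : Fin k, ∑ t ∈ cuts x i U, ∑ f : V → Fin k,
            gap x i t * (if ∀ a ∈ U, t ≤ x a i → f a = i
              then P x (U.filter (fun a => ¬ t ≤ x a i)) f else 0)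
            * (if f u ≠ f v then (1:ℝ) else 0)) / (∑ i, Mx x i U) := by
          calc ∑ f : V → Fin k, P x U f * (if f u ≠ f v then (1:ℝ) else 0)
              = ∑ f : V → Fin k, (∑ i : Fin k, ∑ t ∈ cuts x i U,
                  gap x i t * (if ∀ a ∈ U, t ≤ x a i → f a = i
                    then P x (U.filter (fun a => ¬ t ≤ x a i)) f else 0)
                  * (if f u ≠ f v then (1:ℝ) else 0)) / (∑ i, Mx x i U) := by
                apply sum_congr rfl
                intro f _
                rw [P_apply hUe, div_mul_eq_mul_div, sum_mul]
                congr 1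
                exact sum_congr rfl fun i _ => by rw [sum_mul]
            _ = (∑ f : V → Fin k, ∑ i : Fin k, ∑ t ∈ cuts x i U,
                  gap x i t * (if ∀ a ∈ U, t ≤ x a i → f a = i
                    then P x (U.filter (fun a => ¬ t ≤ x a i)) f else 0)
                  * (if f u ≠ f v then (1:ℝ) else 0)) / (∑ i, Mx x i U) := by
                rw [← sum_div]
            _ = (∑ i : Fin k, ∑ t ∈ cuts x i U, ∑ f : V → Fin k,
                  gap x i t * (if ∀ a ∈ U, t ≤ x a i → f a = i
                    then P x (U.filter (fun a => ¬ t ≤ x a i)) f else 0)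
                  * (if f u ≠ f v then (1:ℝ) else 0)) / (∑ i, Mx x i U) := by
                congr 1
                rw [Finset.sum_comm]
                exact sum_congr rfl fun i _ => Finset.sum_comm
      _ ≤ (∑ i : Fin k, ∑ t ∈ cuts x i U,
            gap x i t * (K * (((if t ≤ max (x u i) (x v i) then (1:ℝ) else 0)
              - (if t ≤ min (x u i) (x v i) then (1:ℝ) else 0))
            + (1 - (if t ≤ max (x u i) (x v i) then (1:ℝ) else 0)) * R)))
            / (∑ i, Mx x i U) := by
          rw [div_le_div_iff_of_pos_right hD0]
          apply sum_le_sum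
          intro i _
          apply sum_le_sum
          intro t ht
          calc ∑ f : V → Fin k,
              gap x i t * (if ∀ a ∈ U, t ≤ x a i → f a = i
                then P x (U.filter (fun a => ¬ t ≤ x a i)) f else 0)
              * (if f u ≠ f v then (1:ℝ) else 0)
              = gap x i t * ∑ f : V → Fin k,
                (if ∀ a ∈ U, t ≤ x a i → f a = i
                  then P x (U.filter (fun a => ¬ t ≤ x a i)) f else 0)
                * (if f u ≠ f v then (1:ℝ) else 0) := by
                rw [mul_sum]
                exact sum_congr rfl fun f _ => by ring
            _ ≤ gap x i t * (K * (((if t ≤ max (x u i) (x v i) then (1:ℝ) else 0)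
                - (if t ≤ min (x u i) (x v i) then (1:ℝ) else 0))
                + (1 - (if t ≤ max (x u i) (x v i) then (1:ℝ) else 0)) * R)) :=
                mul_le_mul_of_nonneg_left (hterm i t ht) (gap_nonneg_cuts ht)
      _ = (K * R * (∑ i, Mx x i U)) / (∑ i, Mx x i U) := by
          congr 1
          have hsum_t : ∀ i : Fin k, ∑ t ∈ cuts x i U,
              gap x i t * (K * (((if t ≤ max (x u i) (x v i) then (1:ℝ) else 0)
                - (if t ≤ min (x u i) (x v i) then (1:ℝ) else 0))
              + (1 - (if t ≤ max (x u i) (x v i) then (1:ℝ) else 0)) * R))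
              = K * max (x u i) (x v i) - K * min (x u i) (x v i)
                + (K * R) * Mx x i U - (K * R) * max (x u i) (x v i) := by
            intro i
            calc ∑ t ∈ cuts x i U,
                gap x i t * (K * (((if t ≤ max (x u i) (x v i) then (1:ℝ) else 0)
                  - (if t ≤ min (x u i) (x v i) then (1:ℝ) else 0))
                + (1 - (if t ≤ max (x u i) (x v i) then (1:ℝ) else 0)) * R))
                = ∑ t ∈ cuts x i U,
                  (K * (gap x i t * (if t ≤ max (x u i) (x v i) then (1:ℝ) else 0))
                  - K * (gap x i t * (if t ≤ min (x u i) (x v i) then (1:ℝ) else 0))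
                  + (K * R) * gap x i t
                  - (K * R) * (gap x i t * (if t ≤ max (x u i) (x v i) then (1:ℝ) else 0))) :=
                  sum_congr rfl fun t _ => by ring
              _ = K * max (x u i) (x v i) - K * min (x u i) (x v i)
                  + (K * R) * Mx x i U - (K * R) * max (x u i) (x v i) := by
                  rw [sum_sub_distrib, sum_add_distrib, sum_sub_distrib,
                    ← mul_sum, ← mul_sum, ← mul_sum, ← mul_sum,
                    hmax i, hmin i, sum_gap_cuts]
          rw [sum_congr rfl fun i _ => hsum_t i]
          rw [sum_sub_distrib, sum_add_distrib, sum_sub_distrib,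
            ← mul_sum, ← mul_sum, ← mul_sum, ← mul_sum]
          have h1 : (∑ i, max (x u i) (x v i)) - (∑ i, min (x u i) (x v i))
              = ∑ i, |x u i - x v i| := by
            rw [← sum_sub_distrib]
            exact sum_congr rfl fun i _ => by rw [max_sub_min_eq_abs, abs_sub_comm]
          have h2 : R * (∑ i, max (x u i) (x v i)) = ∑ i, |x u i - x v i| :=
            div_mul_cancel₀ _ (ne_of_gt hSm0)
          linear_combination K * h1 - K * h2
      _ = R * K := by
          rw [mul_div_assoc, div_self (ne_of_gt hD0)]
          ring


/-- Generic expansion of an expectation against the first step of the process. -/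
lemma P_expand (χ : (V → Fin k) → ℝ) {U : Finset V} (hUe : U ≠ ∅) :
    ∑ f : V → Fin k, P x U f * χ f
      = (∑ i : Fin k, ∑ t ∈ cuts x i U, ∑ f : V → Fin k,
          gap x i t * (if ∀ a ∈ U, t ≤ x a i → f a = i
            then P x (U.filter (fun a => ¬ t ≤ x a i)) f else 0) * χ f)
        / (∑ i, Mx x i U) := by
  calc ∑ f : V → Fin k, P x U f * χ f
      = ∑ f : V → Fin k, (∑ i : Fin k, ∑ t ∈ cuts x i U,
          gap x i t * (if ∀ a ∈ U, t ≤ x a i → f a = i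
            then P x (U.filter (fun a => ¬ t ≤ x a i)) f else 0)
          * χ f) / (∑ i, Mx x i U) := by
        apply sum_congr rfl
        intro f _
        rw [P_apply hUe, div_mul_eq_mul_div, sum_mul]
        congr 1
        exact sum_congr rfl fun i _ => by rw [sum_mul]
    _ = (∑ f : V → Fin k, ∑ i : Fin k, ∑ t ∈ cuts x i U,
          gap x i t * (if ∀ a ∈ U, t ≤ x a i → f a = i
            then P x (U.filter (fun a => ¬ t ≤ x a i)) f else 0)
          * χ f) / (∑ i, Mx x i U) := by
        rw [← sum_div]
    _ = _ := by
        congr 1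
        rw [Finset.sum_comm]
        exact sum_congr rfl fun i _ => Finset.sum_comm

/-- If `x u i > 0`, the label of `u` is `i` with positive probability. -/
lemma P_marginal_pos (hx1 : ∀ u, ∑ i, x u i = 1) (u : V) (i : Fin k) (hpos : 0 < x u i) :
    0 < ∑ f : V → Fin k, (if f u = i then P x univ f else 0) := by
  have hUe : (univ : Finset V) ≠ ∅ := ne_empty_of_mem (mem_univ u)
  have hD1 : (1:ℝ) ≤ ∑ i', Mx x i' (univ : Finset V) := one_le_sum_Mx hx1 ⟨u, mem_univ u⟩
  have hD0 : (0:ℝ) < ∑ i', Mx x i' (univ : Finset V) := lt_of_lt_of_le one_pos hD1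
  -- rewrite via χ
  have hrw : ∑ f : V → Fin k, (if f u = i then P x univ f else 0)
      = ∑ f : V → Fin k, P x univ f * (if f u = i then (1:ℝ) else 0) :=
    sum_congr rfl fun f _ => (mul_boole _ _).symm
  rw [hrw, P_expand (fun f => if f u = i then (1:ℝ) else 0) hUe]
  apply div_pos ?_ hD0
  -- find a positive term
  have hxmem : x u i ∈ Tset x i := val_mem_Tset x i u
  have hxM : x u i ≤ Mx x i (univ : Finset V) := le_Mx (mem_univ u)
  have hsum := sum_gap_indicator (U := (univ : Finset V)) hxmem (le_of_lt hpos) hxM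
  have hex : ∃ t ∈ cuts x i (univ : Finset V),
      gap x i t * (if t ≤ x u i then (1:ℝ) else 0) ≠ 0 := by
    apply exists_ne_zero_of_sum_ne_zero
    rw [hsum]
    exact ne_of_gt hpos
  obtain ⟨t₀, ht₀c, ht₀⟩ := hex
  have ht₀u : t₀ ≤ x u i := by
    by_contra hc
    rw [if_neg hc, mul_zero] at ht₀
    exact ht₀ rfl
  have hgap0 : 0 < gap x i t₀ := by
    rcases lt_or_eq_of_le (gap_nonneg_cuts ht₀c) with h | h
    · exact h
    · exfalso; rw [if_pos ht₀u, mul_one] at ht₀; exact ht₀ h.symm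
  -- all terms nonneg
  have hnn : ∀ i' : Fin k, (0:ℝ) ≤ ∑ t ∈ cuts x i' (univ : Finset V), ∑ f : V → Fin k,
      gap x i' t * (if ∀ a ∈ (univ : Finset V), t ≤ x a i' → f a = i'
        then P x ((univ : Finset V).filter (fun a => ¬ t ≤ x a i')) f else 0)
      * (if f u = i then (1:ℝ) else 0) := by
    intro i'
    apply sum_nonneg
    intro t ht
    apply sum_nonneg
    intro f _
    apply mul_nonneg
    apply mul_nonneg (gap_nonneg_cuts ht)
    · split
      · exact P_nonneg' _ _
      · exact le_rfl
    · split <;> norm_num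
  have hnn2 : ∀ t ∈ cuts x i (univ : Finset V), (0:ℝ) ≤ ∑ f : V → Fin k,
      gap x i t * (if ∀ a ∈ (univ : Finset V), t ≤ x a i → f a = i
        then P x ((univ : Finset V).filter (fun a => ¬ t ≤ x a i)) f else 0)
      * (if f u = i then (1:ℝ) else 0) := by
    intro t ht
    apply sum_nonneg
    intro f _
    apply mul_nonneg
    apply mul_nonneg (gap_nonneg_cuts ht)
    · split
      · exact P_nonneg' _ _
      · exact le_rfl
    · split <;> norm_num
  -- the chosen term is positive
  have hterm : (0:ℝ) < ∑ f : V → Fin k,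
      gap x i t₀ * (if ∀ a ∈ (univ : Finset V), t₀ ≤ x a i → f a = i
        then P x ((univ : Finset V).filter (fun a => ¬ t₀ ≤ x a i)) f else 0)
      * (if f u = i then (1:ℝ) else 0) := by
    have hptw : ∀ f : V → Fin k,
        gap x i t₀ * (if ∀ a ∈ (univ : Finset V), t₀ ≤ x a i → f a = i
          then P x ((univ : Finset V).filter (fun a => ¬ t₀ ≤ x a i)) f else 0)
        * (if f u = i then (1:ℝ) else 0)
        = gap x i t₀ * (if ∀ a ∈ (univ : Finset V), t₀ ≤ x a i → f a = i
          then P x ((univ : Finset V).filter (fun a => ¬ t₀ ≤ x a i)) f else 0) := by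
      intro f
      by_cases hc : ∀ a ∈ (univ : Finset V), t₀ ≤ x a i → f a = i
      · rw [if_pos (hc u (mem_univ u) ht₀u), mul_one]
      · rw [if_neg hc, mul_zero, zero_mul]
    rw [sum_congr rfl fun f _ => hptw f, ← mul_sum, sum_cond_P hx1 ht₀c]
    have : ((univ : Finset V) \ (univ : Finset V)).card = 0 := by rw [sdiff_self]; simp
    rw [this, pow_zero, mul_one]
    exact hgap0
  calc (0:ℝ) < ∑ f : V → Fin k,
        gap x i t₀ * (if ∀ a ∈ (univ : Finset V), t₀ ≤ x a i → f a = i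
          then P x ((univ : Finset V).filter (fun a => ¬ t₀ ≤ x a i)) f else 0)
        * (if f u = i then (1:ℝ) else 0) := hterm
    _ ≤ ∑ t ∈ cuts x i (univ : Finset V), ∑ f : V → Fin k,
        gap x i t * (if ∀ a ∈ (univ : Finset V), t ≤ x a i → f a = i
          then P x ((univ : Finset V).filter (fun a => ¬ t ≤ x a i)) f else 0)
        * (if f u = i then (1:ℝ) else 0) :=
        single_le_sum hnn2 ht₀c
    _ ≤ ∑ i' : Fin k, ∑ t ∈ cuts x i' (univ : Finset V), ∑ f : V → Fin k,
        gap x i' t * (if ∀ a ∈ (univ : Finset V), t ≤ x a i' → f a = i'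
          then P x ((univ : Finset V).filter (fun a => ¬ t ≤ x a i')) f else 0)
        * (if f u = i then (1:ℝ) else 0) :=
        single_le_sum (fun i' _ => hnn i') (mem_univ i)

end KT

/-- (Rounding lemma for the CKR LP.)  Given a feasible LP solution `x`,
writing `d(u,v) = ‖x_u − x_v‖₁/2`, there is a finitely supported probability distribution
over multiway cuts `f : V → Fin k` (functions with `f (s i) = i`) such that for all
vertices `u, v`: `Pr[f u ≠ f v] ≤ 2d/(1+d)`, hence `Pr[f u ≠ f v] ≤ 2d` and
`Pr[f u = f v] ≥ (1−d)/2`; moreover, if `x` is not integral, the support of the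
distribution contains at least two distinct functions. -/
theorem stmt5 {V : Type*} [Fintype V] [DecidableEq V] {k : ℕ}
    (s : Fin k → V) (hs : Function.Injective s)
    (x : V → Fin k → ℝ) (hfeas : CKRFeasible s x) :
    ∃ p : (V → Fin k) → ℝ,
      (∀ f, 0 ≤ p f) ∧ (∑ f : V → Fin k, p f = 1) ∧
      (∀ f, p f ≠ 0 → IsMultiwayCut s f) ∧
      (∀ u v : V,
        (∑ f : V → Fin k, p f * (if f u ≠ f v then 1 else 0)) ≤
            2 * ((∑ i, |x u i - x v i|) / 2) / (1 + (∑ i, |x u i - x v i|) / 2) ∧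
        (∑ f : V → Fin k, p f * (if f u ≠ f v then 1 else 0)) ≤
            2 * ((∑ i, |x u i - x v i|) / 2) ∧
        (1 - (∑ i, |x u i - x v i|) / 2) / 2 ≤
            (∑ f : V → Fin k, p f * (if f u = f v then 1 else 0))) ∧
      ((¬ ∀ u : V, ∃ i : Fin k, x u = Pi.single i 1) →
        ∃ f g : V → Fin k, p f ≠ 0 ∧ p g ≠ 0 ∧ f ≠ g) := by
  obtain ⟨hx0, hx1, hxs⟩ := hfeas
  rcases isEmpty_or_nonempty V with hV | hV
  · refine ⟨fun _ => 1, fun f => zero_le_one, ?_, ?_, ?_, ?_⟩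
    · rw [sum_const, card_univ]
      have hc : Fintype.card (V → Fin k) = 1 := by
        rw [Fintype.card_fun, show Fintype.card V = 0 from @Fintype.card_eq_zero V _ hV,
          pow_zero]
      rw [hc]
      simp
    · intro f _ i
      exact (hV.false (s i)).elim
    · intro u
      exact (hV.false u).elim
    · intro h
      exact absurd (fun u => (hV.false u).elim) h
  · obtain ⟨u₀⟩ := hV
    have hzero : ((univ : Finset V) \ univ).card = 0 := by rw [sdiff_self]; simp
    have hsumP : ∑ f : V → Fin k, P x univ f = 1 := by
      rw [sum_P_eq hx1 univ.card univ le_rfl, hzero, pow_zero]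
    refine ⟨P x univ, fun f => P_nonneg' univ f, hsumP, ?_, ?_, ?_⟩
    · intro f hf i
      exact P_terminal s hxs univ.card univ le_rfl f hf i (mem_univ _)
    · intro u v
      have hb := P_pair hx0 hx1 u v univ.card univ le_rfl (mem_univ u) (mem_univ v)
      rw [hzero, pow_zero, mul_one] at hb
      have hDd0 : (0:ℝ) ≤ ∑ i, |x u i - x v i| := sum_nonneg fun i _ => abs_nonneg _
      have hSm : (∑ i, max (x u i) (x v i)) = 1 + (∑ i, |x u i - x v i|) / 2 := by
        have hptw : ∀ i : Fin k, max (x u i) (x v i)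
            = ((x u i + x v i) + |x u i - x v i|) / 2 := by
          intro i
          rcases le_total (x u i) (x v i) with h | h
          · rw [max_eq_right h, abs_of_nonpos (by linarith)]; ring
          · rw [max_eq_left h, abs_of_nonneg (by linarith)]; ring
        calc ∑ i, max (x u i) (x v i)
            = ∑ i, (((x u i + x v i) + |x u i - x v i|) / 2) :=
              sum_congr rfl fun i _ => hptw i
          _ = ((∑ i, x u i) + (∑ i, x v i) + ∑ i, |x u i - x v i|) / 2 := by
              rw [← sum_div, sum_add_distrib, sum_add_distrib]
          _ = 1 + (∑ i, |x u i - x v i|) / 2 := by rw [hx1 u, hx1 v]; ring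
      have hSm0 : (0:ℝ) < ∑ i, max (x u i) (x v i) := by rw [hSm]; linarith
      have hDd2 : (∑ i, |x u i - x v i|) ≤ 2 := by
        calc ∑ i, |x u i - x v i| ≤ ∑ i, (x u i + x v i) :=
            sum_le_sum fun i _ => abs_le.2
              ⟨by linarith [hx0 u i, hx0 v i], by linarith [hx0 v i]⟩
          _ = 2 := by rw [sum_add_distrib, hx1 u, hx1 v]; norm_num
      refine ⟨?_, ?_, ?_⟩
      · have heq : 2 * ((∑ i, |x u i - x v i|) / 2) / (1 + (∑ i, |x u i - x v i|) / 2)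
            = (∑ i, |x u i - x v i|) / (∑ i, max (x u i) (x v i)) := by
          rw [hSm]
          congr 1
          ring
        rw [heq]
        exact hb
      · calc ∑ f : V → Fin k, P x univ f * (if f u ≠ f v then (1:ℝ) else 0)
            ≤ (∑ i, |x u i - x v i|) / (∑ i, max (x u i) (x v i)) := hb
          _ ≤ ∑ i, |x u i - x v i| := by
              rw [hSm]
              exact div_le_self hDd0 (by linarith)
          _ = 2 * ((∑ i, |x u i - x v i|) / 2) := by ring
      · have hsplit : (∑ f : V → Fin k, P x univ f * (if f u = f v then (1:ℝ) else 0))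
            + (∑ f : V → Fin k, P x univ f * (if f u ≠ f v then (1:ℝ) else 0)) = 1 := by
          rw [← sum_add_distrib]
          have hptw : ∀ f : V → Fin k,
              P x univ f * (if f u = f v then (1:ℝ) else 0)
              + P x univ f * (if f u ≠ f v then (1:ℝ) else 0) = P x univ f := by
            intro f
            by_cases h : f u = f v
            · rw [if_pos h, if_neg (fun hne => hne h)]; ring
            · rw [if_neg h, if_pos h]; ring
          rw [sum_congr rfl fun f _ => hptw f]
          exact hsumP
        have hq : ((∑ i, |x u i - x v i|) / (∑ i, max (x u i) (x v i)))
            * (∑ i, max (x u i) (x v i)) = ∑ i, |x u i - x v i| :=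
          div_mul_cancel₀ _ (ne_of_gt hSm0)
        nlinarith [hb, hq, hSm, hSm0, hDd0, hDd2, hsplit,
          sq_nonneg (1 - (∑ i, |x u i - x v i|) / 2)]
    · intro h
      push_neg at h
      obtain ⟨u, hu⟩ := h
      have hsum1 := hx1 u
      have hex : ∃ i, x u i ≠ 0 := by
        by_contra hc
        push_neg at hc
        rw [sum_congr rfl fun i _ => hc i] at hsum1
        simp at hsum1
      obtain ⟨i, hi⟩ := hex
      have hipos : 0 < x u i := lt_of_le_of_ne (hx0 u i) (Ne.symm hi)
      have herase : x u i + ∑ j ∈ univ.erase i, x u j = 1 := by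
        rw [add_sum_erase univ (x u) (mem_univ i)]
        exact hx1 u
      have hile : x u i ≤ 1 := by
        calc x u i ≤ ∑ j, x u j :=
            single_le_sum (fun j _ => hx0 u j) (mem_univ i)
          _ = 1 := hx1 u
      have hilt : x u i < 1 := by
        rcases lt_or_eq_of_le hile with h | h
        · exact h
        · exfalso
          apply hu i
          have hrest : ∑ j ∈ univ.erase i, x u j = 0 := by linarith
          have hall : ∀ j ∈ univ.erase i, x u j = 0 :=
            (sum_eq_zero_iff_of_nonneg (fun j _ => hx0 u j)).1 hrest
          funext j
          by_cases hij : j = i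
          · rw [hij, h, Pi.single_eq_same]
          · rw [hall j (mem_erase.2 ⟨hij, mem_univ j⟩), Pi.single_eq_of_ne hij]
      have hrestpos : 0 < ∑ j ∈ univ.erase i, x u j := by linarith
      obtain ⟨j, hjmem, hj⟩ := exists_ne_zero_of_sum_ne_zero (ne_of_gt hrestpos)
      have hjne : j ≠ i := (mem_erase.1 hjmem).1
      have hjpos : 0 < x u j := lt_of_le_of_ne (hx0 u j) (Ne.symm hj)
      obtain ⟨f, _, hf⟩ := exists_ne_zero_of_sum_ne_zero
        (ne_of_gt (P_marginal_pos hx1 u i hipos))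
      obtain ⟨g, _, hg⟩ := exists_ne_zero_of_sum_ne_zero
        (ne_of_gt (P_marginal_pos hx1 u j hjpos))
      have hfu : f u = i := by
        by_contra hc
        rw [if_neg hc] at hf
        exact hf rfl
      have hfP : P x univ f ≠ 0 := by rwa [if_pos hfu] at hf
      have hgu : g u = j := by
        by_contra hc
        rw [if_neg hc] at hg
        exact hg rfl
      have hgP : P x univ g ≠ 0 := by rwa [if_pos hgu] at hg
      refine ⟨f, g, hfP, hgP, ?_⟩
      intro he
      apply hjne
      rw [← hgu, ← he, hfu]
end

section
/- Consider the reduction from Sparsest Cut to Max Cut: let V₀ be a finite set with at least two elements, cap and dem symmetric nonnegative functions on unordered pairs of distinct points of V₀, γ ≥ 1, and W∞ > γ·Σ over unordered pairs {u,v} of (2·cap(u,v) + 2·dem(u,v)); let G be the resulting weighted graph on V = V₀×{1,2} and S = V₀×{1}. Suppose that for every A ⊆ V₀ with ∅ ≠ A ≠ V₀: cap(E_c(A,Ā)) > γ·dem(E_d(A,Ā)). Then G is a γ-stable instance of Max Cut with maximum cut (S,S̄): for every T ⊆ V with T ∉ {S, S̄}, w(E(S,S̄)∖E(T,T̄)) >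 γ·w(E(T,T̄)∖E(S,S̄)). -/
open Finset

/-- The reduction from Sparsest Cut to Max Cut: the graph on `V₀ × {1,2}` (here
`V₀ × Bool`, side "1" being `false`) with `w(u₁,v₂) = w(u₂,v₁) = cap(u,v)`,
`w(u₁,v₁) = w(u₂,v₂) = dem(u,v)` for `u ≠ v`, and `w(u₁,u₂) = W∞`. -/
noncomputable def reductionWeight {V₀ : Type*} [DecidableEq V₀]
    (cap dem : V₀ → V₀ → ℝ) (Winf : ℝ) :
    V₀ × Bool → V₀ × Bool → ℝ :=
  fun p q =>
    if p.1 = q.1 then (if p.2 = q.2 then 0 else Winf)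
    else (if p.2 = q.2 then dem p.1 q.1 else cap p.1 q.1)

lemma sum_prod_bool {V₀ : Type*} [Fintype V₀] (f : V₀ × Bool → V₀ × Bool → ℝ) :
    ∑ p, ∑ q, f p q = ∑ u, ∑ v,
      (f (u,false) (v,false) + f (u,false) (v,true) + f (u,true) (v,false) + f (u,true) (v,true)) := by
  rw [Fintype.sum_prod_type]
  simp only [Fintype.sum_bool, Fintype.sum_prod_type]
  refine Finset.sum_congr rfl fun u _ => ?_
  rw [← Finset.sum_add_distrib]
  refine Finset.sum_congr rfl fun v _ => ?_
  ring

lemma pair_le_sum {V : Type*} [Fintype V] [DecidableEq V] (f : V → V → ℝ)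
    (hf : ∀ p q, 0 ≤ f p q) (a b : V) (hab : a ≠ b) :
    f a b + f b a ≤ ∑ p, ∑ q, f p q := by
  have h1 : ∀ p : V, 0 ≤ ∑ q, f p q := fun p => Finset.sum_nonneg fun q _ => hf p q
  have h2 : (∑ p ∈ ({a, b} : Finset V), ∑ q, f p q) ≤ ∑ p, ∑ q, f p q :=
    Finset.sum_le_sum_of_subset_of_nonneg (Finset.subset_univ _) (fun p _ _ => h1 p)
  rw [Finset.sum_pair hab] at h2
  have h3 : f a b ≤ ∑ q, f a q := Finset.single_le_sum (fun q _ => hf a q) (Finset.mem_univ b)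
  have h4 : f b a ≤ ∑ q, f b q := Finset.single_le_sum (fun q _ => hf b q) (Finset.mem_univ a)
  linarith


/-- In the reduction from Sparsest Cut to Max Cut, if every nontrivial
cut `(A, Ā)` of `V₀` has sparsity greater than `γ`, i.e.
`cap(E_c(A,Ā)) > γ·dem(E_d(A,Ā))`, and `W∞ > γ·Σ_{pairs}(2cap + 2dem)`, then the
resulting graph `G` on `V₀ × {1,2}` is a `γ`-stable instance of Max Cut with maximum
cut `(S, S̄)`, `S = V₀ × {1}`. -/
theorem stmt6 {V₀ : Type*} [Fintype V₀] [DecidableEq V₀]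
    (hcard : 2 ≤ Fintype.card V₀)
    (cap dem : V₀ → V₀ → ℝ)
    (hcaps : ∀ u v, cap u v = cap v u) (hdems : ∀ u v, dem u v = dem v u)
    (hcapn : ∀ u v, 0 ≤ cap u v) (hdemn : ∀ u v, 0 ≤ dem u v)
    (hcap0 : ∀ u, cap u u = 0) (hdem0 : ∀ u, dem u u = 0)
    (γ : ℝ) (hγ : 1 ≤ γ) (Winf : ℝ)
    (hW : γ * ((∑ u, ∑ v, (2 * cap u v + 2 * dem u v)) / 2) < Winf)
    (hsparse : ∀ A : Finset V₀, A ≠ ∅ → A ≠ Finset.univ →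
      γ * cutWeight dem (cutSep A) < cutWeight cap (cutSep A)) :
    IsMaxCutStable (reductionWeight cap dem Winf) γ
      (Finset.univ.filter (fun p : V₀ × Bool => p.2 = false)) := by
    classical
  intro T hTS hTSc
  set S : Finset (V₀ × Bool) := Finset.univ.filter (fun p : V₀ × Bool => p.2 = false) with hSdef
  set w : V₀ × Bool → V₀ × Bool → ℝ := reductionWeight cap dem Winf with hwdef
  have hmemS : ∀ p : V₀ × Bool, p ∈ S ↔ p.2 = false := by simp [hSdef]
  have hγ0 : (0:ℝ) < γ := lt_of_lt_of_le one_pos hγ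
  have hcapsum : (0:ℝ) ≤ ∑ u, ∑ v, cap u v :=
    Finset.sum_nonneg fun u _ => Finset.sum_nonneg fun v _ => hcapn u v
  have hdemsum : (0:ℝ) ≤ ∑ u, ∑ v, dem u v :=
    Finset.sum_nonneg fun u _ => Finset.sum_nonneg fun v _ => hdemn u v
  have hsumeq : (∑ u, ∑ v, (2 * cap u v + 2 * dem u v)) / 2
      = (∑ u, ∑ v, cap u v) + (∑ u, ∑ v, dem u v) := by
    have h2 : ∑ u, ∑ v, (2 * cap u v + 2 * dem u v)
        = 2 * ((∑ u, ∑ v, cap u v) + (∑ u, ∑ v, dem u v)) := by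
      simp only [Finset.sum_add_distrib, ← Finset.mul_sum]
      ring
    rw [h2]; ring
  have hWpos : (0:ℝ) < Winf := by
    refine lt_of_le_of_lt ?_ hW
    rw [hsumeq]; positivity
  have hwnn : ∀ p q : V₀ × Bool, 0 ≤ w p q := by
    intro p q
    simp only [hwdef, reductionWeight]
    split <;> split <;>
      first | exact le_refl 0 | exact hWpos.le | exact hdemn _ _ | exact hcapn _ _
  have hdiv : ∀ s t : ℝ, s = 2 * t → s / 2 = 2 * (t / 2) := fun s t h => by rw [h]; ring
  by_cases hA : ∀ u : V₀, ((u,false) ∈ T ↔ (u,true) ∉ T)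
  · -- good case: T corresponds to a cut X of V₀
    set X : Finset V₀ := Finset.univ.filter (fun u => (u,false) ∈ T) with hXdef
    have hTf : ∀ u, ((u,false) ∈ T ↔ u ∈ X) := by intro u; simp [hXdef]
    have hTt : ∀ u, ((u,true) ∈ T ↔ u ∉ X) := by
      intro u; have h1 := hA u; have h2 := hTf u; tauto
    have hX0 : X ≠ ∅ := by
      intro h
      apply hTSc
      ext ⟨u, b⟩
      have h1 : u ∉ X := by simp [h]
      cases b <;> simp [Finset.mem_compl, hmemS, hTf, hTt, h1]
    have hXu : X ≠ Finset.univ := by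
      intro h
      apply hTS
      ext ⟨u, b⟩
      have h1 : u ∈ X := by simp [h]
      cases b <;> simp [hmemS, hTf, hTt, h1]
    have EA : cutWeight w (fun p q => cutSep T p q ∧ ¬ cutSep S p q)
        = 2 * cutWeight dem (cutSep X) := by
      simp only [cutWeight]
      rw [sum_prod_bool]
      apply hdiv
      rw [Finset.mul_sum]
      refine Finset.sum_congr rfl fun u _ => ?_
      rw [Finset.mul_sum]
      refine Finset.sum_congr rfl fun v _ => ?_
      by_cases huv : u = v
      · subst huv
        simp [cutSep, hmemS, hTf, hTt, hwdef, reductionWeight, hdem0]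
      · by_cases hu : u ∈ X <;> by_cases hv : v ∈ X <;>
          simp [cutSep, hmemS, hTf, hTt, hwdef, reductionWeight, hu, hv, huv, two_mul]
    have EB : cutWeight w (fun p q => cutSep S p q ∧ ¬ cutSep T p q)
        = 2 * cutWeight cap (cutSep X) := by
      simp only [cutWeight]
      rw [sum_prod_bool]
      apply hdiv
      rw [Finset.mul_sum]
      refine Finset.sum_congr rfl fun u _ => ?_
      rw [Finset.mul_sum]
      refine Finset.sum_congr rfl fun v _ => ?_
      by_cases huv : u = v
      · subst huv
        simp [cutSep, hmemS, hTf, hTt, hwdef, reductionWeight, hcap0]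
      · by_cases hu : u ∈ X <;> by_cases hv : v ∈ X <;>
          simp [cutSep, hmemS, hTf, hTt, hwdef, reductionWeight, hu, hv, huv, two_mul]
    rw [EA, EB]
    have := hsparse X hX0 hXu
    linarith
  · -- degenerate case: some u₀ with both copies on the same side of T
    push_neg at hA
    obtain ⟨u₀, hu₀⟩ := hA
    have hu₀' : ((u₀,false) ∈ T ↔ (u₀,true) ∈ T) := by tauto
    have hRHS : Winf ≤ cutWeight w (fun p q => cutSep S p q ∧ ¬ cutSep T p q) := by
      simp only [cutWeight]
      rw [le_div_iff₀ (by norm_num : (0:ℝ) < 2)]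
      have hne : ((u₀,false) : V₀ × Bool) ≠ (u₀,true) := by simp
      refine le_trans ?_ (pair_le_sum _ ?_ (u₀,false) (u₀,true) hne)
      · have hc : cutSep S ((u₀,false) : V₀ × Bool) (u₀,true) ∧
            ¬ cutSep T ((u₀,false) : V₀ × Bool) (u₀,true) := by
          constructor
          · left; simp [hmemS]
          · rintro (⟨h1, h2⟩ | ⟨h1, h2⟩)
            · exact h2 (hu₀'.mp h1)
            · exact h2 (hu₀'.mpr h1)
        have hc' : cutSep S ((u₀,true) : V₀ × Bool) (u₀,false) ∧
            ¬ cutSep T ((u₀,true) : V₀ × Bool) (u₀,false) := by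
          constructor
          · right; simp [hmemS]
          · rintro (⟨h1, h2⟩ | ⟨h1, h2⟩)
            · exact h2 (hu₀'.mpr h1)
            · exact h2 (hu₀'.mp h1)
        rw [if_pos hc, if_pos hc']
        have e1 : w ((u₀,false) : V₀ × Bool) (u₀,true) = Winf := by
          simp [hwdef, reductionWeight]
        have e2 : w ((u₀,true) : V₀ × Bool) (u₀,false) = Winf := by
          simp [hwdef, reductionWeight]
        rw [e1, e2]; linarith
      · intro p q
        split
        · exact hwnn p q
        · exact le_refl 0
    have hLHS : cutWeight w (fun p q => cutSep T p q ∧ ¬ cutSep S p q)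
        ≤ ∑ u, ∑ v, dem u v := by
      simp only [cutWeight]
      rw [div_le_iff₀ (by norm_num : (0:ℝ) < 2)]
      have h2 : ∑ p : V₀ × Bool, ∑ q : V₀ × Bool, (if p.2 = q.2 then dem p.1 q.1 else 0)
          = (∑ u, ∑ v, dem u v) * 2 := by
        rw [sum_prod_bool, Finset.sum_mul]
        refine Finset.sum_congr rfl fun u _ => ?_
        rw [Finset.sum_mul]
        refine Finset.sum_congr rfl fun v _ => ?_
        simp; ring
      rw [← h2]
      refine Finset.sum_le_sum fun p _ => Finset.sum_le_sum fun q _ => ?_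
      by_cases h : cutSep T p q ∧ ¬ cutSep S p q
      · rw [if_pos h]
        have hsame : p.2 = q.2 := by
          by_contra hne
          apply h.2
          simp only [cutSep, hmemS]
          cases hp : p.2 <;> cases hq : q.2 <;> simp [hp, hq] at hne ⊢
        rw [if_pos hsame]
        simp only [hwdef, reductionWeight, if_pos hsame]
        split
        · rename_i hh; rw [hh]; simp [hdem0, hdemn]
        · exact le_refl _
      · rw [if_neg h]
        split
        · exact hdemn _ _
        · exact le_refl 0
    have hstep2 : γ * (∑ u, ∑ v, dem u v) < Winf := by
      refine lt_of_le_of_lt ?_ hW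
      rw [hsumeq]
      have h3 : (∑ u, ∑ v, dem u v) ≤ (∑ u, ∑ v, cap u v) + (∑ u, ∑ v, dem u v) :=
        le_add_of_nonneg_left hcapsum
      exact mul_le_mul_of_nonneg_left h3 hγ0.le
    have h4 := mul_le_mul_of_nonneg_left hLHS hγ0.le
    linarith
end

section
/- Consider the reduction from Sparsest Cut to Max Cut on a finite set V₀ with n = |V₀| ≥ 2, producing the weighted graph G on V = V₀×{1,2} with S = V₀×{1}. For any A ⊆ V₀, let T = {u₁ : u ∈ A} ∪ {u₂ : u ∉ A}. Then w(E(S,S̄)) − w(E(T,T̄)) = 2·cap(E_c(A,Ā)) − 2·dem(E_d(A,Ā)). In particular, if dem(E_d(A,Ā)) > cap(E_c(A,Ā)) for some A ⊆ V₀, then (S,S̄) is not a maximum cut of G. -/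
open Finset

/-- In the reduction from Sparsest Cut to Max Cut (with `W∞ ≥ 0`),
for every `A ⊆ V₀` and the corresponding cut `T = {u₁ : u ∈ A} ∪ {u₂ : u ∉ A}`:
`w(E(S,S̄)) − w(E(T,T̄)) = 2·cap(E_c(A,Ā)) − 2·dem(E_d(A,Ā))`.  In particular, if
`dem(E_d(A,Ā)) > cap(E_c(A,Ā))` for some `A`, then `(S, S̄)` is not a maximum cut. -/
theorem stmt7 {V₀ : Type*} [Fintype V₀] [DecidableEq V₀]
    (hcard : 2 ≤ Fintype.card V₀)
    (cap dem : V₀ → V₀ → ℝ)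
    (hcaps : ∀ u v, cap u v = cap v u) (hdems : ∀ u v, dem u v = dem v u)
    (hcapn : ∀ u v, 0 ≤ cap u v) (hdemn : ∀ u v, 0 ≤ dem u v)
    (hcap0 : ∀ u, cap u u = 0) (hdem0 : ∀ u, dem u u = 0)
    (Winf : ℝ) (hWinf : 0 ≤ Winf) :
    (∀ A : Finset V₀,
      cutWeight (reductionWeight cap dem Winf)
          (cutSep (Finset.univ.filter (fun p : V₀ × Bool => p.2 = false))) -
        cutWeight (reductionWeight cap dem Winf)
          (cutSep (Finset.univ.filter (fun p : V₀ × Bool =>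
            (p.1 ∈ A ∧ p.2 = false) ∨ (p.1 ∉ A ∧ p.2 = true)))) =
      2 * cutWeight cap (cutSep A) - 2 * cutWeight dem (cutSep A)) ∧
    ((∃ A : Finset V₀, cutWeight cap (cutSep A) < cutWeight dem (cutSep A)) →
      ∃ T : Finset (V₀ × Bool),
        cutWeight (reductionWeight cap dem Winf)
            (cutSep (Finset.univ.filter (fun p : V₀ × Bool => p.2 = false))) <
          cutWeight (reductionWeight cap dem Winf) (cutSep T)) := by
  classical
  set rW := reductionWeight cap dem Winf with hrw
  letI instDec : (p : Prop) → Decidable p := Classical.propDecidable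
  -- bridge: cutWeight with ambient (classical-tactic) instances
  have bridgeW : ∀ (P : V₀ × Bool → V₀ × Bool → Prop),
      cutWeight rW P = (∑ p : V₀ × Bool, ∑ q : V₀ × Bool, if P p q then rW p q else 0) / 2 := by
    intro P
    simp only [cutWeight]
  have bridge : ∀ (f : V₀ → V₀ → ℝ) (A : Finset V₀),
      cutWeight f (cutSep A) = (∑ u : V₀, ∑ v : V₀, if cutSep A u v then f u v else 0) / 2 := by
    intro f A
    simp only [cutWeight]
  have expand : ∀ (P : V₀ × Bool → V₀ × Bool → Prop),
      (∑ p : V₀ × Bool, ∑ q : V₀ × Bool, if P p q then rW p q else 0) =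
      ∑ u : V₀, ∑ v : V₀,
        ((if P (u, true) (v, true) then rW (u, true) (v, true) else 0)
        + (if P (u, true) (v, false) then rW (u, true) (v, false) else 0)
        + (if P (u, false) (v, true) then rW (u, false) (v, true) else 0)
        + (if P (u, false) (v, false) then rW (u, false) (v, false) else 0)) := by
    intro P
    simp only [Fintype.sum_prod_type, Fintype.sum_bool, ← Finset.sum_add_distrib]
    exact Finset.sum_congr rfl fun u _ => Finset.sum_congr rfl fun v _ => by ring
  have key : ∀ A : Finset V₀,
      cutWeight rW (cutSep (Finset.univ.filter (fun p : V₀ × Bool => p.2 = false))) -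
        cutWeight rW (cutSep (Finset.univ.filter (fun p : V₀ × Bool =>
          (p.1 ∈ A ∧ p.2 = false) ∨ (p.1 ∉ A ∧ p.2 = true)))) =
      2 * cutWeight cap (cutSep A) - 2 * cutWeight dem (cutSep A) := by
    intro A
    rw [bridgeW, bridgeW, bridge, bridge, expand, expand]
    have h : (∑ u : V₀, ∑ v : V₀,
        ((if cutSep (Finset.univ.filter (fun p : V₀ × Bool => p.2 = false)) (u, true) (v, true) then rW (u, true) (v, true) else 0)
        + (if cutSep (Finset.univ.filter (fun p : V₀ × Bool => p.2 = false)) (u, true) (v, false) then rW (u, true) (v, false) else 0)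
        + (if cutSep (Finset.univ.filter (fun p : V₀ × Bool => p.2 = false)) (u, false) (v, true) then rW (u, false) (v, true) else 0)
        + (if cutSep (Finset.univ.filter (fun p : V₀ × Bool => p.2 = false)) (u, false) (v, false) then rW (u, false) (v, false) else 0)))
        - (∑ u : V₀, ∑ v : V₀,
        ((if cutSep (Finset.univ.filter (fun p : V₀ × Bool => (p.1 ∈ A ∧ p.2 = false) ∨ (p.1 ∉ A ∧ p.2 = true))) (u, true) (v, true) then rW (u, true) (v, true) else 0)
        + (if cutSep (Finset.univ.filter (fun p : V₀ × Bool => (p.1 ∈ A ∧ p.2 = false) ∨ (p.1 ∉ A ∧ p.2 = true))) (u, true) (v, false) then rW (u, true) (v, false) else 0)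
        + (if cutSep (Finset.univ.filter (fun p : V₀ × Bool => (p.1 ∈ A ∧ p.2 = false) ∨ (p.1 ∉ A ∧ p.2 = true))) (u, false) (v, true) then rW (u, false) (v, true) else 0)
        + (if cutSep (Finset.univ.filter (fun p : V₀ × Bool => (p.1 ∈ A ∧ p.2 = false) ∨ (p.1 ∉ A ∧ p.2 = true))) (u, false) (v, false) then rW (u, false) (v, false) else 0)))
        = ∑ u : V₀, ∑ v : V₀,
          (2 * (if cutSep A u v then cap u v else 0) - 2 * (if cutSep A u v then dem u v else 0)) := by
      rw [← Finset.sum_sub_distrib]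
      refine Finset.sum_congr rfl fun u _ => ?_
      rw [← Finset.sum_sub_distrib]
      refine Finset.sum_congr rfl fun v _ => ?_
      simp only [hrw, reductionWeight, cutSep, Finset.mem_filter, Finset.mem_univ, true_and]
      by_cases huv : u = v
      · subst huv
        by_cases hu : u ∈ A <;> simp [hu, hcap0, hdem0]
      · by_cases hu : u ∈ A <;> by_cases hv : v ∈ A <;>
          simp [hu, hv, huv, Ne.symm huv] <;> ring
    have h2 : (∑ u : V₀, ∑ v : V₀,
          (2 * (if cutSep A u v then cap u v else 0) - 2 * (if cutSep A u v then dem u v else 0)))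
        = 2 * (∑ u : V₀, ∑ v : V₀, if cutSep A u v then cap u v else 0)
          - 2 * (∑ u : V₀, ∑ v : V₀, if cutSep A u v then dem u v else 0) := by
      simp only [Finset.sum_sub_distrib, Finset.mul_sum]
    rw [h2] at h
    linarith
  have hinst : (fun a : V₀ × Bool => instDec (a.2 = false)) = (fun a : V₀ × Bool => instDecidableEqBool a.2 false) := by
    funext a; exact Subsingleton.elim _ _
  rw [show (@Finset.filter (V₀ × Bool) (fun p => p.2 = false) (fun a => instDec (a.2 = false)) Finset.univ) = (@Finset.filter (V₀ × Bool) (fun p => p.2 = false) (fun a => instDecidableEqBool a.2 false) Finset.univ) from by rw [hinst]] at key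
  refine ⟨fun A => ?_, ?_⟩
  · convert key A using 5
  rintro ⟨A, hA⟩
  refine ⟨Finset.univ.filter (fun p : V₀ × Bool =>
      (p.1 ∈ A ∧ p.2 = false) ∨ (p.1 ∉ A ∧ p.2 = true)), ?_⟩
  have := key A
  linarith
end

section
/- Let {x_u : u ∈ U} be a family of unit vectors in a real inner product space such that ‖x_u − x_v‖² ≤ 1 for all u,v ∈ U and ‖x_u − x_v‖² + ‖x_v − x_w‖² ≥ ‖x_u − x_w‖² for all u,v,w ∈ U. Then the set {x_u, −x_u : u ∈ U} satisfies the ℓ2²-triangle inequalities: for all u,v,w ∈ U and all signs ε₁, ε₂, ε₃ ∈ {+1,−1}, ‖ε₁x_u − ε₂x_v‖² + ‖ε₂x_v − ε₃x_w‖² ≥ ‖ε₁x_u − ε₃x_w‖². -/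
/-- If `{x_u : u ∈ U}` are unit vectors in a real inner product space
with `‖x_u − x_v‖² ≤ 1` for all `u, v` and satisfying the `ℓ2²`-triangle inequalities
among themselves, then the whole set `{x_u, −x_u : u ∈ U}` satisfies the `ℓ2²`-triangle
inequalities: for all `u, v, w` and all signs `ε₁, ε₂, ε₃ ∈ {+1, −1}`,
`‖ε₁x_u − ε₂x_v‖² + ‖ε₂x_v − ε₃x_w‖² ≥ ‖ε₁x_u − ε₃x_w‖²`. -/
theorem stmt9 {U : Type*} {H : Type*} [NormedAddCommGroup H] [InnerProductSpace ℝ H]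
    (x : U → H) (hunit : ∀ u, ‖x u‖ = 1)
    (hsmall : ∀ u v, ‖x u - x v‖ ^ 2 ≤ 1)
    (htri : ∀ u v w, ‖x u - x v‖ ^ 2 + ‖x v - x w‖ ^ 2 ≥ ‖x u - x w‖ ^ 2) :
    ∀ u v w : U, ∀ ε₁ ε₂ ε₃ : ℝ,
      (ε₁ = 1 ∨ ε₁ = -1) → (ε₂ = 1 ∨ ε₂ = -1) → (ε₃ = 1 ∨ ε₃ = -1) →
      ‖ε₁ • x u - ε₂ • x v‖ ^ 2 + ‖ε₂ • x v - ε₃ • x w‖ ^ 2 ≥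
        ‖ε₁ • x u - ε₃ • x w‖ ^ 2 := by
  have hsq : ∀ u v : U, ‖x u - x v‖ ^ 2 = 2 - 2 * (inner ℝ (x u) (x v) : ℝ) := by
    intro u v
    have h := @norm_sub_sq_real H _ _ (x u) (x v)
    rw [hunit u, hunit v] at h
    linarith [h]
  have hkey : ∀ (ε δ : ℝ) (u v : U), (ε = 1 ∨ ε = -1) → (δ = 1 ∨ δ = -1) →
      ‖ε • x u - δ • x v‖ ^ 2 = 2 - 2 * (ε * δ) * (inner ℝ (x u) (x v) : ℝ) := by
    intro ε δ u v hε hδ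
    have h := @norm_sub_sq_real H _ _ (ε • x u) (δ • x v)
    rw [real_inner_smul_left, real_inner_smul_right, norm_smul, norm_smul,
      hunit u, hunit v] at h
    rcases hε with rfl | rfl <;> rcases hδ with rfl | rfl <;>
      simp only [norm_one, norm_neg] at h <;> rw [h] <;> ring
  intro u v w ε₁ ε₂ ε₃ h1 h2 h3
  rw [hkey ε₁ ε₂ u v h1 h2, hkey ε₂ ε₃ v w h2 h3, hkey ε₁ ε₃ u w h1 h3]
  set a := (inner ℝ (x u) (x v) : ℝ) with ha
  set b := (inner ℝ (x v) (x w) : ℝ) with hb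
  set c := (inner ℝ (x u) (x w) : ℝ) with hc
  have ha2 : a ≥ 1 / 2 := by have := hsmall u v; rw [hsq u v] at this; linarith
  have hb2 : b ≥ 1 / 2 := by have := hsmall v w; rw [hsq v w] at this; linarith
  have hc2 : c ≥ 1 / 2 := by have := hsmall u w; rw [hsq u w] at this; linarith
  have t1 : a + b - c ≤ 1 := by
    have := htri u v w; rw [hsq u v, hsq v w, hsq u w] at this; linarith
  have t2 : a + c - b ≤ 1 := by
    have h := htri v u w
    rw [hsq v u, hsq v w, hsq u w] at h
    have hcm : (inner ℝ (x v) (x u) : ℝ) = inner ℝ (x u) (x v) := real_inner_comm _ _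
    linarith [ha, hb, hc]
  have t3 : b + c - a ≤ 1 := by
    have h := htri u w v
    rw [hsq u w, hsq w v, hsq u v] at h
    have hcm : (inner ℝ (x w) (x v) : ℝ) = inner ℝ (x v) (x w) := real_inner_comm _ _
    linarith [ha, hb, hc]
  rcases h1 with rfl | rfl <;> rcases h2 with rfl | rfl <;> rcases h3 with rfl | rfl <;>
    norm_num <;> linarith
end

section
/- Let G be a finite simple graph, let k ≥ 4, and let G' be the join of G with the complete graph on k−3 new vertices: V(G') = V(G) ⊎ W with |W| = k−3, and the edges of G' are the edges of G, all pairs of distinct vertices within W, and all pairs with one endpoint in V(G) and the other in W. Then G is uniquely 3-colorable if and only if G' is uniquely k-colorable. -/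
/-- `G` is uniquely `m`-colorable: it has a proper `m`-coloring, and any two proper
`m`-colorings differ by a permutation of the colors. -/
def UniquelyColorable {β : Type*} (G : SimpleGraph β) (m : ℕ) : Prop :=
  (∃ c : β → Fin m, ∀ u v, G.Adj u v → c u ≠ c v) ∧
  (∀ c₁ c₂ : β → Fin m, (∀ u v, G.Adj u v → c₁ u ≠ c₁ v) →
    (∀ u v, G.Adj u v → c₂ u ≠ c₂ v) →
    ∃ π : Equiv.Perm (Fin m), c₂ = ⇑π ∘ c₁)

/-- The join of `G` with a complete graph on `m` new vertices: vertex set `V(G) ⊎ Fin m`;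
edges are the edges of `G`, all pairs of distinct new vertices, and all pairs with one
endpoint in `V(G)` and the other a new vertex. -/
def joinWithClique {α : Type*} (G : SimpleGraph α) (m : ℕ) :
    SimpleGraph (α ⊕ Fin m) :=
  SimpleGraph.fromRel (fun x y =>
    match x, y with
    | Sum.inl u, Sum.inl v => G.Adj u v
    | _, _ => True)

lemma jwc_adj_inl_inl {α : Type*} (G : SimpleGraph α) (m : ℕ) (u v : α) :
    (joinWithClique G m).Adj (Sum.inl u) (Sum.inl v) ↔ G.Adj u v := by
  simp only [joinWithClique, SimpleGraph.fromRel_adj]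
  constructor
  · rintro ⟨-, h | h⟩
    · exact h
    · exact h.symm
  · intro h
    exact ⟨fun he => G.ne_of_adj h (Sum.inl.inj he), Or.inl h⟩

lemma jwc_adj_inl_inr {α : Type*} (G : SimpleGraph α) (m : ℕ) (u : α) (i : Fin m) :
    (joinWithClique G m).Adj (Sum.inl u) (Sum.inr i) := by
  simp [joinWithClique, SimpleGraph.fromRel_adj]

lemma jwc_adj_inr_inr {α : Type*} (G : SimpleGraph α) (m : ℕ) (i j : Fin m) :
    (joinWithClique G m).Adj (Sum.inr i) (Sum.inr j) ↔ i ≠ j := by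
  simp [joinWithClique, SimpleGraph.fromRel_adj]

/-- Extension of a 3-coloring of `G` to a `k`-coloring of the join. -/
def extCol {α : Type*} {m k : ℕ} (hmk : m + 3 = k) (d : α → Fin 3) :
    α ⊕ Fin m → Fin k :=
  Sum.elim (fun u => ⟨(d u : ℕ), by have := (d u).isLt; omega⟩)
    (fun i => ⟨3 + (i : ℕ), by have := i.isLt; omega⟩)

lemma extCol_proper {α : Type*} (G : SimpleGraph α) {m k : ℕ} (hmk : m + 3 = k)
    (d : α → Fin 3) (hd : ∀ u v, G.Adj u v → d u ≠ d v) :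
    ∀ x y, (joinWithClique G m).Adj x y → extCol hmk d x ≠ extCol hmk d y := by
  rintro (u | i) (v | j) hadj h
  · rw [jwc_adj_inl_inl] at hadj
    exact hd u v hadj (Fin.ext (by simpa [extCol] using congrArg Fin.val h))
  · have := congrArg Fin.val h
    simp only [extCol, Sum.elim_inl, Sum.elim_inr] at this
    have := (d u).isLt; omega
  · have := congrArg Fin.val h
    simp only [extCol, Sum.elim_inl, Sum.elim_inr] at this
    have := (d v).isLt; omega
  · rw [jwc_adj_inr_inr] at hadj
    have := congrArg Fin.val h
    simp only [extCol, Sum.elim_inr] at this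
    exact hadj (Fin.ext (by omega))

/-- For `k ≥ 4`, a finite simple graph `G` is uniquely `3`-colorable
if and only if the join `G'` of `G` with the complete graph on `k − 3` new vertices is
uniquely `k`-colorable. -/
theorem stmt13 {α : Type*} [Fintype α] (G : SimpleGraph α) (k : ℕ) (hk : 4 ≤ k) :
    UniquelyColorable G 3 ↔ UniquelyColorable (joinWithClique G (k - 3)) k := by
  classical
  set m := k - 3 with hm
  have hmk : m + 3 = k := by omega
  constructor
  · rintro ⟨⟨c, hc⟩, huniq⟩
    constructor
    · exact ⟨extCol hmk c, extCol_proper G hmk c hc⟩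
    · intro c₁ c₂ h1 h2
      -- the colorings restricted to the clique
      set f₁ : Fin m → Fin k := fun i => c₁ (Sum.inr i) with hf₁def
      set f₂ : Fin m → Fin k := fun i => c₂ (Sum.inr i) with hf₂def
      have hf₁ : Function.Injective f₁ := by
        intro i j hij
        by_contra hne
        exact h1 _ _ ((jwc_adj_inr_inr G m i j).2 hne) hij
      have hf₂ : Function.Injective f₂ := by
        intro i j hij
        by_contra hne
        exact h2 _ _ ((jwc_adj_inr_inr G m i j).2 hne) hij
      have hcard₁ : Fintype.card {x : Fin k // x ∉ Set.range f₁} = 3 := by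
        have h1' : Fintype.card {x : Fin k // x ∈ Set.range f₁} = m :=
          (Fintype.card_congr (Equiv.ofInjective f₁ hf₁).symm).trans (Fintype.card_fin m)
        rw [Fintype.card_subtype_compl, h1', Fintype.card_fin]
        omega
      have hcard₂ : Fintype.card {x : Fin k // x ∉ Set.range f₂} = 3 := by
        have h2' : Fintype.card {x : Fin k // x ∈ Set.range f₂} = m :=
          (Fintype.card_congr (Equiv.ofInjective f₂ hf₂).symm).trans (Fintype.card_fin m)
        rw [Fintype.card_subtype_compl, h2', Fintype.card_fin]
        omega
      set e₁ := Fintype.equivFinOfCardEq hcard₁ with he₁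
      set e₂ := Fintype.equivFinOfCardEq hcard₂ with he₂
      have hmem₁ : ∀ u : α, c₁ (Sum.inl u) ∉ Set.range f₁ := by
        rintro u ⟨i, hi⟩
        exact h1 _ _ (jwc_adj_inl_inr G m u i) hi.symm
      have hmem₂ : ∀ u : α, c₂ (Sum.inl u) ∉ Set.range f₂ := by
        rintro u ⟨i, hi⟩
        exact h2 _ _ (jwc_adj_inl_inr G m u i) hi.symm
      set d₁ : α → Fin 3 := fun u => e₁ ⟨c₁ (Sum.inl u), hmem₁ u⟩ with hd₁def
      set d₂ : α → Fin 3 := fun u => e₂ ⟨c₂ (Sum.inl u), hmem₂ u⟩ with hd₂def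
      have hd₁ : ∀ u v, G.Adj u v → d₁ u ≠ d₁ v := by
        intro u v hadj h
        have := e₁.injective h
        exact h1 _ _ ((jwc_adj_inl_inl G m u v).2 hadj) (congrArg Subtype.val this)
      have hd₂ : ∀ u v, G.Adj u v → d₂ u ≠ d₂ v := by
        intro u v hadj h
        have := e₂.injective h
        exact h2 _ _ ((jwc_adj_inl_inl G m u v).2 hadj) (congrArg Subtype.val this)
      obtain ⟨σ, hσ⟩ := huniq d₁ d₂ hd₁ hd₂
      -- build the permutation of Fin k
      set g : Fin k → Fin k := fun x =>
        if h : x ∈ Set.range f₁ then f₂ ((Equiv.ofInjective f₁ hf₁).symm ⟨x, h⟩)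
        else (e₂.symm (σ (e₁ ⟨x, h⟩)) : Fin k) with hgdef
      have hg_inj : Function.Injective g := by
        intro x y hxy
        by_cases hx : x ∈ Set.range f₁ <;> by_cases hy : y ∈ Set.range f₁ <;>
          simp only [hgdef, hx, hy, dif_pos, dif_neg, not_false_iff] at hxy
        · exact congrArg Subtype.val ((Equiv.ofInjective f₁ hf₁).symm.injective (hf₂ hxy))
        · exact absurd (hxy ▸ Set.mem_range_self _) (e₂.symm (σ (e₁ ⟨y, hy⟩))).2
        · exact absurd (hxy ▸ Set.mem_range_self _) (e₂.symm (σ (e₁ ⟨x, hx⟩))).2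
        · have := e₂.symm.injective (Subtype.ext hxy)
          have := σ.injective this
          have := e₁.injective this
          exact congrArg Subtype.val this
      refine ⟨Equiv.ofBijective g (Finite.injective_iff_bijective.mp hg_inj), ?_⟩
      funext x
      rcases x with u | i
      · have hx : c₁ (Sum.inl u) ∉ Set.range f₁ := hmem₁ u
        show c₂ (Sum.inl u) = g (c₁ (Sum.inl u))
        rw [hgdef]
        simp only [dif_neg hx]
        have : σ (e₁ ⟨c₁ (Sum.inl u), hx⟩) = d₂ u := by
          have := congrFun hσ u
          simp only [Function.comp_apply] at this
          exact this.symm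
        rw [this, hd₂def]
        simp
      · have hx : c₁ (Sum.inr i) ∈ Set.range f₁ := ⟨i, rfl⟩
        show c₂ (Sum.inr i) = g (c₁ (Sum.inr i))
        rw [hgdef]
        simp only [dif_pos hx]
        have : (Equiv.ofInjective f₁ hf₁).symm ⟨c₁ (Sum.inr i), hx⟩ = i :=
          Equiv.ofInjective_symm_apply hf₁ i
        rw [this]
  · rintro ⟨⟨c, hc⟩, huniq⟩
    constructor
    · -- restrict a coloring of the join to a 3-coloring of G
      set f : Fin m → Fin k := fun i => c (Sum.inr i) with hfdef
      have hf : Function.Injective f := by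
        intro i j hij
        by_contra hne
        exact hc _ _ ((jwc_adj_inr_inr G m i j).2 hne) hij
      have hcard : Fintype.card {x : Fin k // x ∉ Set.range f} = 3 := by
        have h' : Fintype.card {x : Fin k // x ∈ Set.range f} = m :=
          (Fintype.card_congr (Equiv.ofInjective f hf).symm).trans (Fintype.card_fin m)
        rw [Fintype.card_subtype_compl, h', Fintype.card_fin]
        omega
      set e := Fintype.equivFinOfCardEq hcard with he
      have hmem : ∀ u : α, c (Sum.inl u) ∉ Set.range f := by
        rintro u ⟨i, hi⟩
        exact hc _ _ (jwc_adj_inl_inr G m u i) hi.symm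
      refine ⟨fun u => e ⟨c (Sum.inl u), hmem u⟩, ?_⟩
      intro u v hadj h
      have := e.injective h
      exact hc _ _ ((jwc_adj_inl_inl G m u v).2 hadj) (congrArg Subtype.val this)
    · intro d₁ d₂ hd₁ hd₂
      have h3k : 3 ≤ k := by omega
      obtain ⟨π, hπ⟩ := huniq (extCol hmk d₁) (extCol hmk d₂)
        (extCol_proper G hmk d₁ hd₁) (extCol_proper G hmk d₂ hd₂)
      have hfix : ∀ i : Fin m, π ⟨3 + (i : ℕ), by omega⟩ = ⟨3 + (i : ℕ), by omega⟩ := by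
        intro i
        have := congrFun hπ (Sum.inr i)
        simp only [Function.comp_apply, extCol, Sum.elim_inr] at this
        exact this.symm
      have hlt : ∀ x : Fin k, (x : ℕ) < 3 → ((π x : Fin k) : ℕ) < 3 := by
        intro x hx
        by_contra hge
        push_neg at hge
        have hik : (π x : Fin k).val - 3 < m := by omega
        have h1 : π ⟨3 + ((π x : Fin k).val - 3), by omega⟩
            = ⟨3 + ((π x : Fin k).val - 3), by omega⟩ := hfix ⟨(π x : Fin k).val - 3, hik⟩
        have h2 : (⟨3 + ((π x : Fin k).val - 3), by omega⟩ : Fin k) = π x := Fin.ext (by simp; omega)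
        have h3 : (⟨3 + ((π x : Fin k).val - 3), by omega⟩ : Fin k) = x :=
          π.injective (h1.trans h2)
        have hxval : (3 : ℕ) + ((π x : Fin k).val - 3) = (x : ℕ) := congrArg Fin.val h3
        omega
      have hτlt : ∀ j : Fin 3, ((π (Fin.castLE h3k j) : Fin k) : ℕ) < 3 := by
        intro j
        exact hlt _ (by simp)
      set τ : Fin 3 → Fin 3 := fun j => ⟨((π (Fin.castLE h3k j) : Fin k) : ℕ), hτlt j⟩ with hτ
      have hτinj : Function.Injective τ := by
        intro j j' hjj
        have h1 := congrArg Fin.val hjj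
        have h2 : π (Fin.castLE h3k j) = π (Fin.castLE h3k j') := Fin.ext h1
        have h3 := π.injective h2
        exact Fin.castLE_injective h3k h3
      refine ⟨Equiv.ofBijective τ (Finite.injective_iff_bijective.mp hτinj), ?_⟩
      funext u
      have hcf := congrFun hπ (Sum.inl u)
      simp only [Function.comp_apply, extCol, Sum.elim_inl] at hcf
      show d₂ u = τ (d₁ u)
      apply Fin.ext
      show (d₂ u : ℕ) = ((π (Fin.castLE h3k (d₁ u)) : Fin k) : ℕ)
      have hcast : Fin.castLE h3k (d₁ u) = (⟨((d₁ u : ℕ)), by omega⟩ : Fin k) := rfl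
      rw [hcast]
      have hv := congrArg Fin.val hcf
      simpa using hv
end
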